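/- arXiv:1704.06799 — 5 statements merged into one kernel-verified Lean document; each statement's English description precedes it below -/
import Mathlib

section
/- Let q₁,...,q_m ∈ ℝ^D be m linearly independent vectors and let r = 2s + n be a positive integer with r ≤ 2(D−m)+1. Then the tensor monomials of rank r formed as tensor products of s Kronecker delta tensors and n vectors from {q₁,...,q_m} (in all inequivalent index arrangements) are linearly independent: if a linear combination of them vanishes, then all coefficients vanish. -/
/-- A monomial datum on rank `r` with `m` vector labels: each index slot is either
assigned a vector label (`Sum.inl k`) or paired with another, different, slot
(`Sum.inr j`), the pairing being symmetric.  A pair of slots `{i,j}` corresponds to a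
Kronecker delta factor `δ_{μᵢμⱼ}` and a slot labelled `k` to a factor `q_k`. -/
def IsMonomialDatum {r m : ℕ} (P : Fin r → Fin m ⊕ Fin r) : Prop :=
  ∀ i j, P i = Sum.inr j → j ≠ i ∧ P j = Sum.inr i

/-- The rank-`r` tensor monomial on `ℝ^D` associated to a monomial datum:
the tensor product of the Kronecker deltas of the paired slots and of the
vectors `q k` of the labelled slots. -/
def monomialTensor {D r m : ℕ} (q : Fin m → (Fin D → ℝ))
    (P : Fin r → Fin m ⊕ Fin r) : (Fin r → Fin D) → ℝ :=
  fun μ => ∏ i, (match P i with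
    | Sum.inl k => q k (μ i)
    | Sum.inr j => if μ i = μ j then (1 : ℝ) else 0)

/- ========================================================================
   Auxiliary material for the proof.
   ======================================================================== -/

open Finset

noncomputable section MonomialAux

/-- The standard dot product on `Fin D → ℝ`. -/
def dotP {D : ℕ} (x y : Fin D → ℝ) : ℝ := ∑ a, x a * y a

lemma dotP_comm {D : ℕ} (x y : Fin D → ℝ) : dotP x y = dotP y x := by
  unfold dotP; simp [mul_comm]

/-- Pairing of a rank-`r` tensor with a pure tensor `u₁ ⊗ ⋯ ⊗ u_r`. -/
def evP {D r : ℕ} (t : (Fin r → Fin D) → ℝ) (u : Fin r → Fin D → ℝ) : ℝ :=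
  ∑ μ : Fin r → Fin D, t μ * ∏ i, u i (μ i)

/-- Monomial tensor with an arbitrary label type. -/
def monoT {D r : ℕ} {ι : Type} (v : ι → Fin D → ℝ) (P : Fin r → ι ⊕ Fin r) :
    (Fin r → Fin D) → ℝ :=
  fun μ => ∏ i, (match P i with
    | Sum.inl k => v k (μ i)
    | Sum.inr j => if μ i = μ j then (1 : ℝ) else 0)

lemma monomialTensor_eq_monoT {D r m : ℕ} (q : Fin m → (Fin D → ℝ))
    (P : Fin r → Fin m ⊕ Fin r) : monomialTensor q P = monoT q P := by
  funext μ
  unfold monomialTensor monoT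
  exact Finset.prod_congr rfl (fun i _ => by cases hPi : P i <;> rfl)

/-- per-slot factor of a monomial tensor. -/
def mfac {D r : ℕ} {ι : Type} (v : ι → Fin D → ℝ) (P : Fin r → ι ⊕ Fin r)
    (μ : Fin r → Fin D) (i : Fin r) : ℝ :=
  Sum.elim (fun k => v k (μ i)) (fun j => if μ i = μ j then (1:ℝ) else 0) (P i)

/-- per-slot factor of the pairing of a monomial tensor with a pure tensor. -/
def dfac {D r : ℕ} {ι : Type} (v : ι → Fin D → ℝ) (u : Fin r → Fin D → ℝ)
    (P : Fin r → ι ⊕ Fin r) (i : Fin r) : ℝ :=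
  Sum.elim (fun k => dotP (v k) (u i)) (fun j => if i < j then dotP (u i) (u j) else 1) (P i)

lemma monoT_eq {D r : ℕ} {ι : Type} (v : ι → Fin D → ℝ) (P : Fin r → ι ⊕ Fin r)
    (μ : Fin r → Fin D) : monoT v P μ = ∏ i, mfac v P μ i := by
  unfold monoT mfac
  exact Finset.prod_congr rfl (fun i _ => by cases hPi : P i <;> rfl)

lemma evP_pure {D r : ℕ} (v u : Fin r → (Fin D → ℝ)) :
    evP (fun μ => ∏ i, v i (μ i)) u = ∏ i, dotP (v i) (u i) := by
  unfold evP dotP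
  have : ∀ μ : Fin r → Fin D, (∏ i, v i (μ i)) * ∏ i, u i (μ i)
      = ∏ i, (v i (μ i) * u i (μ i)) := by
    intro μ; rw [Finset.prod_mul_distrib]
  simp_rw [this]
  rw [Finset.prod_univ_sum]
  simp

lemma evP_allLabels {D r : ℕ} {ι : Type} (v : ι → Fin D → ℝ) (P : Fin r → ι ⊕ Fin r)
    (hall : ∀ i, ∃ k, P i = Sum.inl k) (u : Fin r → Fin D → ℝ) :
    evP (monoT v P) u = ∏ i, dfac v u P i := by
  choose k hk using hall
  have h1 : monoT v P = fun μ => ∏ i, v (k i) (μ i) := by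
    funext μ
    rw [monoT_eq]
    exact Finset.prod_congr rfl (fun i _ => by unfold mfac; rw [hk i]; rfl)
  rw [h1, evP_pure]
  exact Finset.prod_congr rfl (fun i _ => by unfold dfac; rw [hk i]; rfl)

/-- Key computation: the pairing of a monomial tensor with a pure tensor is
the product of the obvious per-slot/per-pair dot products. -/
lemma evP_mono {D r : ℕ} (N : ℕ) {ι : Type} (v : ι → Fin D → ℝ) (P : Fin r → ι ⊕ Fin r)
    (hP : ∀ i j, P i = Sum.inr j → j ≠ i ∧ P j = Sum.inr i)
    (hcard : (univ.filter fun i => (P i).isRight).card ≤ N)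
    (u : Fin r → Fin D → ℝ) :
    evP (monoT v P) u = ∏ i, dfac v u P i := by
  induction N generalizing ι with
  | zero =>
    apply evP_allLabels
    intro i
    cases hPi : P i with
    | inl k => exact ⟨k, rfl⟩
    | inr j =>
      exfalso
      have hmem : i ∈ univ.filter fun i => (P i).isRight := by simp [hPi]
      have := Finset.card_pos.mpr ⟨i, hmem⟩
      omega
  | succ N IH =>
    by_cases hex : ∃ a b, P a = Sum.inr b ∧ a < b
    · obtain ⟨a, b, hab, hlt⟩ := hex
      obtain ⟨hne, hba⟩ := hP a b hab
      have hbmem : b ∈ (univ : Finset (Fin r)).erase a := Finset.mem_erase.mpr ⟨hne, mem_univ b⟩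
      set T : Finset (Fin r) := ((univ : Finset (Fin r)).erase a).erase b with hT
      have split : ∀ f : Fin r → ℝ, ∏ i, f i = f a * (f b * ∏ i ∈ T, f i) := by
        intro f
        rw [hT, Finset.mul_prod_erase _ _ hbmem, Finset.mul_prod_erase _ _ (mem_univ a)]
      have hmemT : ∀ i ∈ T, i ≠ a ∧ i ≠ b := by
        intro i hi
        rw [hT] at hi
        simp only [Finset.mem_erase] at hi
        exact ⟨hi.2.1, hi.1⟩
      set v' : (ι ⊕ Fin D) → Fin D → ℝ :=
        Sum.elim v (fun c x => if x = c then (1:ℝ) else 0) with hv'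
      set P' : Fin D → Fin r → (ι ⊕ Fin D) ⊕ Fin r :=
        fun c i => if i = a ∨ i = b then Sum.inl (Sum.inr c)
          else Sum.elim (fun k => Sum.inl (Sum.inl k)) Sum.inr (P i) with hP'def
      have hPother : ∀ i, i ≠ a → i ≠ b → ∀ c,
          P' c i = Sum.elim (fun k => Sum.inl (Sum.inl k)) Sum.inr (P i) := by
        intro i hia hib c
        simp [hP'def, hia, hib]
      have hP'a : ∀ c, P' c a = Sum.inl (Sum.inr c) := by intro c; simp [hP'def]
      have hP'b : ∀ c, P' c b = Sum.inl (Sum.inr c) := by intro c; simp [hP'def]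
      have hP' : ∀ c, ∀ i j, P' c i = Sum.inr j → j ≠ i ∧ P' c j = Sum.inr i := by
        intro c i j h
        by_cases hia : i = a ∨ i = b
        · exfalso
          rw [show P' c i = Sum.inl (Sum.inr c) by
            rcases hia with h'|h' <;> (subst h'; simp [hP'def])] at h
          simp at h
        · push_neg at hia
          rw [hPother i hia.1 hia.2 c] at h
          cases hPi : P i with
          | inl k => rw [hPi] at h; simp at h
          | inr j' =>
            rw [hPi] at h
            have hj' : j' = j := Sum.inr_injective h
            subst hj'
            obtain ⟨hji, hPj⟩ := hP i j' hPi
            have hja : j' ≠ a := by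
              intro hh; subst hh
              rw [hab] at hPj
              exact hia.2 (Sum.inr_injective hPj).symm
            have hjb : j' ≠ b := by
              intro hh; subst hh
              rw [hba] at hPj
              exact hia.1 (Sum.inr_injective hPj).symm
            refine ⟨hji, ?_⟩
            rw [hPother j' hja hjb c, hPj]
            rfl
      have hmfacT : ∀ (c : Fin D) (μ : Fin r → Fin D), ∀ i ∈ T,
          mfac v' (P' c) μ i = mfac v P μ i := by
        intro c μ i hi
        obtain ⟨hia, hib⟩ := hmemT i hi
        unfold mfac
        rw [hPother i hia hib c]
        cases hPi : P i <;> rfl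
      have key : ∀ μ : Fin r → Fin D, monoT v P μ = ∑ c : Fin D, monoT v' (P' c) μ := by
        intro μ
        have hrhs : ∀ c : Fin D, monoT v' (P' c) μ
            = (if μ a = c then (1:ℝ) else 0) *
              ((if μ b = c then (1:ℝ) else 0) * ∏ i ∈ T, mfac v P μ i) := by
          intro c
          rw [monoT_eq, split (mfac v' (P' c) μ)]
          congr 1
          · unfold mfac; rw [hP'a c]; rfl
          congr 1
          · unfold mfac; rw [hP'b c]; rfl
          exact Finset.prod_congr rfl (hmfacT c μ)
        rw [monoT_eq, split (mfac v P μ)]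
        simp_rw [hrhs]
        have hma : mfac v P μ a = if μ a = μ b then (1:ℝ) else 0 := by
          unfold mfac; rw [hab]; rfl
        have hmb : mfac v P μ b = if μ b = μ a then (1:ℝ) else 0 := by
          unfold mfac; rw [hba]; rfl
        rw [hma, hmb]
        simp_rw [← mul_assoc, ← Finset.sum_mul]
        congr 1
        have hsimp : ∀ c : Fin D, (if μ a = c then (1:ℝ) else 0) * (if μ b = c then 1 else 0)
            = if μ a = c then (if μ b = c then (1:ℝ) else 0) else 0 := by
          intro c; split <;> simp
        simp_rw [hsimp]
        rw [Finset.sum_ite_eq]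
        by_cases h : μ a = μ b
        · simp [h]
        · simp [h, Ne.symm h]
      have hsub : ∀ c, (univ.filter fun i => ((P' c i).isRight)) =
          (((univ.filter fun i => (P i).isRight)).erase a).erase b := by
        intro c
        ext i
        simp only [Finset.mem_erase, Finset.mem_filter, Finset.mem_univ, true_and]
        by_cases hia : i = a ∨ i = b
        · rw [show P' c i = Sum.inl (Sum.inr c) by
            rcases hia with h'|h' <;> (subst h'; simp [hP'def])]
          simp only [Sum.isRight_inl, Bool.false_eq_true, false_iff]
          rintro ⟨h1, h2, _⟩
          rcases hia with h'|h' <;> [exact h2 h'; exact h1 h']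
        · push_neg at hia
          rw [hPother i hia.1 hia.2 c]
          cases hPi : P i <;> simp [hia.1, hia.2]
      have hcard' : ∀ c, (univ.filter fun i => ((P' c i).isRight)).card ≤ N := by
        intro c
        rw [hsub c]
        have hamem : a ∈ univ.filter (fun i => (P i).isRight) := by simp [hab]
        have h1 : ((((univ.filter fun i => (P i).isRight)).erase a).erase b).card
            ≤ (((univ.filter fun i => (P i).isRight)).erase a).card :=
          Finset.card_le_card (Finset.erase_subset _ _)
        have h2 := Finset.card_erase_of_mem hamem
        have h3 := Finset.card_pos.mpr ⟨a, hamem⟩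
        omega
      calc evP (monoT v P) u
          = ∑ μ : Fin r → Fin D, (∑ c : Fin D, monoT v' (P' c) μ) * ∏ i, u i (μ i) := by
            unfold evP
            exact Finset.sum_congr rfl (fun μ _ => by rw [key μ])
        _ = ∑ c : Fin D, evP (monoT v' (P' c)) u := by
            unfold evP
            simp_rw [Finset.sum_mul]
            rw [Finset.sum_comm]
        _ = ∑ c : Fin D, ∏ i, dfac v' u (P' c) i :=
            Finset.sum_congr rfl (fun c _ => IH v' (P' c) (hP' c) (hcard' c))
        _ = ∏ i, dfac v u P i := by
            have hfc : ∀ c : Fin D, ∏ i, dfac v' u (P' c) i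
                = u a c * (u b c * ∏ i ∈ T, dfac v u P i) := by
              intro c
              rw [split (dfac v' u (P' c))]
              congr 1
              · unfold dfac
                rw [hP'a c]
                show dotP (fun x => if x = c then (1:ℝ) else 0) (u a) = u a c
                unfold dotP
                simp [ite_mul]
              congr 1
              · unfold dfac
                rw [hP'b c]
                show dotP (fun x => if x = c then (1:ℝ) else 0) (u b) = u b c
                unfold dotP
                simp [ite_mul]
              refine Finset.prod_congr rfl (fun i hi => ?_)
              obtain ⟨hia, hib⟩ := hmemT i hi
              unfold dfac
              rw [hPother i hia hib c]
              cases hPi : P i <;> rfl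
            simp_rw [hfc, ← mul_assoc, ← Finset.sum_mul]
            have hdA : dfac v u P a = ∑ c, u a c * u b c := by
              unfold dfac
              rw [hab]
              show (if a < b then dotP (u a) (u b) else 1) = _
              rw [if_pos hlt]
              rfl
            have hdB : dfac v u P b = 1 := by
              unfold dfac
              rw [hba]
              show (if b < a then dotP (u b) (u a) else 1) = 1
              rw [if_neg (not_lt_of_gt hlt)]
            rw [split (dfac v u P), hdA, hdB, one_mul]
    · apply evP_allLabels
      intro i
      cases hPi : P i with
      | inl k => exact ⟨k, rfl⟩
      | inr j =>
        exfalso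
        obtain ⟨hji, hPj⟩ := hP i j hPi
        rcases lt_or_gt_of_ne (Ne.symm hji) with h | h
        · exact hex ⟨i, j, hPi, h⟩
        · exact hex ⟨j, i, hPj, h⟩

/- Euclidean-space constructions -/

def toEuc {D : ℕ} (x : Fin D → ℝ) : EuclideanSpace ℝ (Fin D) :=
  (WithLp.equiv 2 (Fin D → ℝ)).symm x

lemma dotP_eq_inner {D : ℕ} (x y : Fin D → ℝ) :
    dotP x y = inner ℝ (toEuc x) (toEuc y) := by
  unfold dotP toEuc
  rw [PiLp.inner_apply]
  simp [RCLike.inner_apply, mul_comm]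

variable {D m : ℕ} (q : Fin m → (Fin D → ℝ))

def spanQ : Submodule ℝ (EuclideanSpace ℝ (Fin D)) :=
  Submodule.span ℝ (Set.range fun k => toEuc (q k))

lemma qE_li (hq : LinearIndependent ℝ q) :
    LinearIndependent ℝ (fun k => toEuc (q k)) :=
  hq.map' (WithLp.linearEquiv 2 ℝ (Fin D → ℝ)).symm.toLinearMap
    (LinearEquiv.ker _)

instance : FiniteDimensional ℝ (spanQ q) :=
  FiniteDimensional.span_of_finite ℝ (Set.finite_range _)

def pDual (hq : LinearIndependent ℝ q) : Fin m → Fin D → ℝ := fun k =>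
  (WithLp.equiv 2 (Fin D → ℝ))
    (((InnerProductSpace.toDual ℝ (spanQ q)).symm
      (LinearMap.toContinuousLinearMap ((Module.Basis.span (qE_li q hq)).coord k)) : spanQ q) :
        EuclideanSpace ℝ (Fin D))

def wOnb : Fin (Module.finrank ℝ ((spanQ q)ᗮ)) → Fin D → ℝ := fun a =>
  (WithLp.equiv 2 (Fin D → ℝ))
    (((stdOrthonormalBasis ℝ ((spanQ q)ᗮ)) a : (spanQ q)ᗮ) : EuclideanSpace ℝ (Fin D))

lemma toEuc_pDual (hq : LinearIndependent ℝ q) (k : Fin m) :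
    toEuc (pDual q hq k) = (((InnerProductSpace.toDual ℝ (spanQ q)).symm
      (LinearMap.toContinuousLinearMap ((Module.Basis.span (qE_li q hq)).coord k)) : spanQ q) :
        EuclideanSpace ℝ (Fin D)) := rfl

lemma toEuc_wOnb (a : Fin (Module.finrank ℝ ((spanQ q)ᗮ))) :
    toEuc (wOnb q a) = (((stdOrthonormalBasis ℝ ((spanQ q)ᗮ)) a : (spanQ q)ᗮ) :
      EuclideanSpace ℝ (Fin D)) := rfl

lemma qE_mem (l : Fin m) : toEuc (q l) ∈ spanQ q :=
  Submodule.subset_span (Set.mem_range_self l)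

lemma dot_pq (hq : LinearIndependent ℝ q) (k l : Fin m) :
    dotP (pDual q hq k) (q l) = if l = k then 1 else 0 := by
  rw [dotP_eq_inner, toEuc_pDual]
  have hB : (⟨toEuc (q l), qE_mem q l⟩ : spanQ q) = Module.Basis.span (qE_li q hq) l := by
    apply Subtype.ext
    rw [Module.Basis.span_apply]
  have h2 : (inner ℝ (((InnerProductSpace.toDual ℝ (spanQ q)).symm
      (LinearMap.toContinuousLinearMap ((Module.Basis.span (qE_li q hq)).coord k)) : spanQ q) :
        EuclideanSpace ℝ (Fin D)) (toEuc (q l)) : ℝ)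
      = inner ℝ ((InnerProductSpace.toDual ℝ (spanQ q)).symm
      (LinearMap.toContinuousLinearMap ((Module.Basis.span (qE_li q hq)).coord k)))
        (⟨toEuc (q l), qE_mem q l⟩ : spanQ q) := by
    rw [Submodule.coe_inner]
  rw [h2, InnerProductSpace.toDual_symm_apply, hB]
  simp only [LinearMap.coe_toContinuousLinearMap', Module.Basis.coord_apply]
  generalize Module.Basis.span (qE_li q hq) = B
  exact B.repr_self_apply l k

lemma dot_wq (a : Fin (Module.finrank ℝ ((spanQ q)ᗮ))) (l : Fin m) :
    dotP (wOnb q a) (q l) = 0 := by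
  rw [dotP_eq_inner, toEuc_wOnb]
  have hmem := ((stdOrthonormalBasis ℝ ((spanQ q)ᗮ)) a).2
  exact (Submodule.mem_orthogonal' (spanQ q) _).mp hmem _ (qE_mem q l)

lemma dot_ww (a b : Fin (Module.finrank ℝ ((spanQ q)ᗮ))) :
    dotP (wOnb q a) (wOnb q b) = if a = b then 1 else 0 := by
  rw [dotP_eq_inner, toEuc_wOnb, toEuc_wOnb]
  have h := (stdOrthonormalBasis ℝ ((spanQ q)ᗮ)).orthonormal
  rw [orthonormal_iff_ite] at h
  have h2 := h a b
  rw [Submodule.coe_inner] at h2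
  simpa using h2

lemma dot_pw (hq : LinearIndependent ℝ q) (k : Fin m) (a : Fin (Module.finrank ℝ ((spanQ q)ᗮ))) :
    dotP (pDual q hq k) (wOnb q a) = 0 := by
  rw [dotP_eq_inner, toEuc_pDual, toEuc_wOnb]
  have hmem := ((stdOrthonormalBasis ℝ ((spanQ q)ᗮ)) a).2
  exact hmem _ (Subtype.coe_prop _)

lemma rank_wOnb (hq : LinearIndependent ℝ q) :
    Module.finrank ℝ ((spanQ q)ᗮ) = D - m := by
  have h1 : Module.finrank ℝ (spanQ q) = m := by
    rw [spanQ, finrank_span_eq_card (qE_li q hq), Fintype.card_fin]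
  have h2 := Submodule.finrank_add_finrank_orthogonal (K := spanQ q)
  have h3 : Module.finrank ℝ (EuclideanSpace ℝ (Fin D)) = D := by
    simp [finrank_euclideanSpace]
  omega

end MonomialAux

/-- Lemma C.1: for `m` linearly independent vectors in `ℝ^D` and `0 < r ≤ 2(D-m)+1`,
the (inequivalent) rank-`r` tensor monomials built from Kronecker deltas and the
given vectors are linearly independent. -/
theorem stmt_1 (D r m : ℕ) (q : Fin m → (Fin D → ℝ))
    (hq : LinearIndependent ℝ q) (hr0 : 0 < r) (hr : r ≤ 2 * (D - m) + 1) :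
    LinearIndependent ℝ
      ((↑) : {t : (Fin r → Fin D) → ℝ //
          ∃ P : Fin r → Fin m ⊕ Fin r, IsMonomialDatum P ∧ t = monomialTensor q P} →
        ((Fin r → Fin D) → ℝ)) := by
  classical
  rw [linearIndependent_iff]
  intro l hl
  by_contra hlne
  have hsupp : l.support.Nonempty := Finsupp.support_nonempty_iff.mpr hlne
  -- the data arising from the support
  set Pset : Finset (Fin r → Fin m ⊕ Fin r) :=
    univ.filter (fun P => IsMonomialDatum P ∧
      ∃ t ∈ l.support, (t : (Fin r → Fin D) → ℝ) = monomialTensor q P) with hPset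
  have hPsetne : Pset.Nonempty := by
    obtain ⟨t, ht⟩ := hsupp
    obtain ⟨P, hP, htP⟩ := t.2
    exact ⟨P, by rw [hPset, Finset.mem_filter]; exact ⟨mem_univ _, hP, t, ht, htP⟩⟩
  obtain ⟨P₀, hP₀mem, hmin⟩ :=
    Pset.exists_min_image (fun P => (univ.filter fun i => (P i).isLeft).card) hPsetne
  rw [hPset, Finset.mem_filter] at hP₀mem
  obtain ⟨-, hP₀, t₀, ht₀sup, ht₀⟩ := hP₀mem
  -- representatives of the pairs of P₀
  set S₀ : Finset (Fin r) := univ.filter (fun i => ∃ j, P₀ i = Sum.inr j ∧ i < j) with hS₀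
  set S₀' : Finset (Fin r) := univ.filter (fun i => ∃ j, P₀ i = Sum.inr j ∧ j < i) with hS₀'
  set L₀ : Finset (Fin r) := univ.filter (fun i => (P₀ i).isLeft) with hL₀
  -- counting: 2 * #S₀ + #L₀ = r
  have hcount : 2 * S₀.card + L₀.card = r := by
    have hdisj1 : Disjoint S₀ S₀' := by
      rw [Finset.disjoint_left]
      intro i hi hi'
      rw [hS₀, Finset.mem_filter] at hi
      rw [hS₀', Finset.mem_filter] at hi'
      obtain ⟨-, j, hj, hij⟩ := hi
      obtain ⟨-, j', hj', hij'⟩ := hi'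
      rw [hj] at hj'
      have := Sum.inr_injective hj'
      omega
    have hdisj2 : Disjoint L₀ (S₀ ∪ S₀') := by
      rw [Finset.disjoint_left]
      intro i hi hi'
      rw [hL₀, Finset.mem_filter] at hi
      rw [Finset.mem_union] at hi'
      rcases hi' with h' | h'
      · rw [hS₀, Finset.mem_filter] at h'
        obtain ⟨-, j, hj, -⟩ := h'
        rw [hj] at hi
        simp at hi
      · rw [hS₀', Finset.mem_filter] at h'
        obtain ⟨-, j, hj, -⟩ := h'
        rw [hj] at hi
        simp at hi
    have huniv : L₀ ∪ (S₀ ∪ S₀') = univ := by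
      apply Finset.eq_univ_of_forall
      intro i
      simp only [Finset.mem_union, hL₀, hS₀, hS₀', Finset.mem_filter, Finset.mem_univ, true_and]
      cases hPi : P₀ i with
      | inl k => exact Or.inl rfl
      | inr j =>
        obtain ⟨hji, hPj⟩ := hP₀ i j hPi
        rcases lt_or_gt_of_ne (Ne.symm hji) with h | h
        · exact Or.inr (Or.inl ⟨j, rfl, h⟩)
        · exact Or.inr (Or.inr ⟨j, rfl, h⟩)
    have hbijc : S₀'.card = S₀.card := by
      apply Finset.card_bij' (fun a _ => Sum.elim (fun _ => a) id (P₀ a))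
        (fun a _ => Sum.elim (fun _ => a) id (P₀ a))
      · intro a ha
        rw [hS₀', Finset.mem_filter] at ha
        obtain ⟨-, j, hj, hja⟩ := ha
        rw [hj]
        obtain ⟨-, hPj⟩ := hP₀ a j hj
        rw [hS₀, Finset.mem_filter]
        exact ⟨mem_univ _, a, hPj, hja⟩
      · intro a ha
        rw [hS₀, Finset.mem_filter] at ha
        obtain ⟨-, j, hj, hja⟩ := ha
        rw [hj]
        obtain ⟨-, hPj⟩ := hP₀ a j hj
        rw [hS₀', Finset.mem_filter]
        exact ⟨mem_univ _, a, hPj, hja⟩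
      · intro a ha
        rw [hS₀', Finset.mem_filter] at ha
        obtain ⟨-, j, hj, hja⟩ := ha
        rw [hj]
        obtain ⟨-, hPj⟩ := hP₀ a j hj
        simp [hPj]
      · intro a ha
        rw [hS₀, Finset.mem_filter] at ha
        obtain ⟨-, j, hj, hja⟩ := ha
        rw [hj]
        obtain ⟨-, hPj⟩ := hP₀ a j hj
        simp [hPj]
    have h1 := Finset.card_union_of_disjoint hdisj2
    have h2 := Finset.card_union_of_disjoint hdisj1
    have h3 : (univ : Finset (Fin r)).card = r := by simp
    rw [huniv, h3, h2] at h1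
    omega
  -- injection of the pair representatives into the orthonormal basis of (spanQ q)ᗮ
  have hsle : S₀.card ≤ Module.finrank ℝ ((spanQ q)ᗮ) := by
    rw [rank_wOnb q hq]
    omega
  set F : {x // x ∈ S₀} → Fin (Module.finrank ℝ ((spanQ q)ᗮ)) :=
    fun x => Fin.castLE hsle ((S₀.orderIsoOfFin rfl).symm x) with hF
  have hFinj : Function.Injective F := by
    intro x y hxy
    rw [hF] at hxy
    have := Fin.castLE_injective hsle hxy
    exact (S₀.orderIsoOfFin rfl).symm.injective this
  -- the pair-representative map
  set ρ : Fin r → Fin r := fun i => Sum.elim (fun _ => i) (fun j => min i j) (P₀ i) with hρ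
  have hρ_eq : ∀ i j, P₀ i = Sum.inr j → ρ i = min i j := by
    intro i j h
    rw [hρ]
    simp only [h, Sum.elim_inr]
  have hρmem : ∀ i j, P₀ i = Sum.inr j → ρ i ∈ S₀ := by
    intro i j h
    rw [hρ_eq i j h]
    obtain ⟨hji, hPj⟩ := hP₀ i j h
    rcases lt_or_gt_of_ne (Ne.symm hji) with hlt | hlt
    · rw [min_eq_left (le_of_lt hlt)]
      rw [hS₀, Finset.mem_filter]
      exact ⟨mem_univ _, j, h, hlt⟩
    · rw [min_eq_right (le_of_lt hlt)]
      rw [hS₀, Finset.mem_filter]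
      exact ⟨mem_univ _, i, hPj, hlt⟩
  -- the test pure tensor
  set u : Fin r → Fin D → ℝ := fun i =>
    Sum.elim (fun k => pDual q hq k)
      (fun _ => if h : ρ i ∈ S₀ then wOnb q (F ⟨ρ i, h⟩) else 0) (P₀ i) with hu
  have hu_inl : ∀ i k, P₀ i = Sum.inl k → u i = pDual q hq k := by
    intro i k h
    rw [hu]
    simp only [h, Sum.elim_inl]
  have hu_inr : ∀ i j (h : P₀ i = Sum.inr j), u i = wOnb q (F ⟨ρ i, hρmem i j h⟩) := by
    intro i j h
    rw [hu]
    simp only [h, Sum.elim_inr]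
    rw [dif_pos (hρmem i j h)]
  -- the pairing functional
  set Lev : ((Fin r → Fin D) → ℝ) →ₗ[ℝ] ℝ :=
    { toFun := fun t => evP t u
      map_add' := by
        intro s t
        unfold evP
        simp [add_mul, Finset.sum_add_distrib]
      map_smul' := by
        intro c t
        unfold evP
        simp [Finset.mul_sum, mul_assoc] } with hLev
  have hLev_apply : ∀ t, Lev t = evP t u := fun t => rfl
  -- evaluation at t₀ is 1
  have hev_t₀ : evP (t₀ : (Fin r → Fin D) → ℝ) u = 1 := by
    rw [ht₀, monomialTensor_eq_monoT]
    rw [evP_mono ((univ.filter fun i => ((P₀ i).isRight)).card) q P₀ hP₀ le_rfl u]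
    apply Finset.prod_eq_one
    intro i _
    cases hPi : P₀ i with
    | inl k =>
      have hd : dfac q u P₀ i = dotP (q k) (u i) := by unfold dfac; rw [hPi]; rfl
      rw [hd, hu_inl i k hPi, dotP_comm, dot_pq q hq k k, if_pos rfl]
    | inr j =>
      have hd : dfac q u P₀ i = if i < j then dotP (u i) (u j) else 1 := by
        unfold dfac; rw [hPi]; rfl
      rw [hd]
      by_cases hij : i < j
      · rw [if_pos hij]
        obtain ⟨hji, hPj⟩ := hP₀ i j hPi
        rw [hu_inr i j hPi, hu_inr j i hPj]
        have hρi : ρ i = i := by rw [hρ_eq i j hPi, min_eq_left (le_of_lt hij)]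
        have hρj : ρ j = i := by rw [hρ_eq j i hPj, min_eq_right (le_of_lt hij)]
        have hsub : (⟨ρ i, hρmem i j hPi⟩ : {x // x ∈ S₀}) = ⟨ρ j, hρmem j i hPj⟩ :=
          Subtype.ext (show ρ i = ρ j by rw [hρi, hρj])
        rw [hsub, dot_ww, if_pos rfl]
      · rw [if_neg hij]
  -- evaluation elsewhere is 0
  have hev_other : ∀ t, l t ≠ 0 → t ≠ t₀ →
      evP (t : (Fin r → Fin D) → ℝ) u = 0 := by
    intro t hlt hne
    obtain ⟨P, hPdat, htP⟩ := t.2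
    have hPmem : P ∈ Pset := by
      rw [hPset, Finset.mem_filter]
      exact ⟨mem_univ _, hPdat, t, Finsupp.mem_support_iff.mpr hlt, htP⟩
    have hminP := hmin P hPmem
    by_contra hev
    rw [htP, monomialTensor_eq_monoT,
      evP_mono ((univ.filter fun i => ((P i).isRight)).card) q P hPdat le_rfl u] at hev
    have hfac : ∀ i, dfac q u P i ≠ 0 := by
      intro i h
      exact hev (Finset.prod_eq_zero (mem_univ i) h)
    -- step 1: labelled slots agree
    have hstep1 : ∀ i k, P i = Sum.inl k → P₀ i = Sum.inl k := by
      intro i k h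
      have hd : dfac q u P i = dotP (q k) (u i) := by unfold dfac; rw [h]; rfl
      cases hP₀i : P₀ i with
      | inl k' =>
        have : dotP (q k) (u i) ≠ 0 := by rw [← hd]; exact hfac i
        rw [hu_inl i k' hP₀i, dotP_comm, dot_pq q hq k' k] at this
        by_cases hkk : k = k'
        · rw [hkk]
        · rw [if_neg hkk] at this; exact absurd rfl this
      | inr j =>
        exfalso
        have : dotP (q k) (u i) ≠ 0 := by rw [← hd]; exact hfac i
        rw [hu_inr i j hP₀i, dotP_comm, dot_wq] at this
        exact this rfl
    -- step 2: the sets of labelled slots coincide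
    have hLsub : (univ.filter fun i => ((P i).isLeft)) ⊆ L₀ := by
      intro i hi
      rw [Finset.mem_filter] at hi
      rw [hL₀, Finset.mem_filter]
      refine ⟨mem_univ _, ?_⟩
      cases hPi : P i with
      | inl k => rw [hstep1 i k hPi]; rfl
      | inr j => rw [hPi] at hi; simp at hi
    have hLeq : (univ.filter fun i => ((P i).isLeft)) = L₀ :=
      Finset.eq_of_subset_of_card_le hLsub hminP
    -- step 3: pairs agree
    have hstep3 : ∀ i j, P i = Sum.inr j → i < j → P₀ i = Sum.inr j := by
      intro i j hPi hij
      obtain ⟨hji, hPj⟩ := hPdat i j hPi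
      have hiL : i ∉ L₀ := by
        rw [← hLeq, Finset.mem_filter]
        rintro ⟨-, h⟩
        rw [hPi] at h
        simp at h
      have hjL : j ∉ L₀ := by
        rw [← hLeq, Finset.mem_filter]
        rintro ⟨-, h⟩
        rw [hPj] at h
        simp at h
      have hP₀i : ∃ j', P₀ i = Sum.inr j' := by
        cases hP₀i : P₀ i with
        | inl k => exact absurd (by rw [hL₀, Finset.mem_filter]; exact ⟨mem_univ _, by rw [hP₀i]; rfl⟩) hiL
        | inr j' => exact ⟨j', rfl⟩
      have hP₀j : ∃ j'', P₀ j = Sum.inr j'' := by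
        cases hP₀j : P₀ j with
        | inl k => exact absurd (by rw [hL₀, Finset.mem_filter]; exact ⟨mem_univ _, by rw [hP₀j]; rfl⟩) hjL
        | inr j'' => exact ⟨j'', rfl⟩
      obtain ⟨j', hP₀i⟩ := hP₀i
      obtain ⟨j'', hP₀j⟩ := hP₀j
      have hd : dfac q u P i = dotP (u i) (u j) := by
        unfold dfac; rw [hPi]; simp only [Sum.elim_inr]; rw [if_pos hij]
      have hne0 : dotP (u i) (u j) ≠ 0 := by rw [← hd]; exact hfac i
      rw [hu_inr i j' hP₀i, hu_inr j j'' hP₀j, dot_ww] at hne0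
      have hFF : F ⟨ρ i, hρmem i j' hP₀i⟩ = F ⟨ρ j, hρmem j j'' hP₀j⟩ := by
        by_contra hc
        rw [if_neg hc] at hne0
        exact hne0 rfl
      have hρρ : ρ i = ρ j := Subtype.ext_iff.mp (hFinj hFF)
      rw [hρ_eq i j' hP₀i, hρ_eq j j'' hP₀j] at hρρ
      -- case analysis on the minima
      rcases min_cases i j' with ⟨hmin1, -⟩ | ⟨hmin1, -⟩ <;>
        rcases min_cases j j'' with ⟨hmin2, -⟩ | ⟨hmin2, -⟩ <;>
        rw [hmin1, hmin2] at hρρ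
      · exact absurd hρρ (ne_of_lt hij)
      · -- i = j'' : P₀ j = inr i, so P₀ i = inr j
        rw [← hρρ] at hP₀j
        exact (hP₀ j i hP₀j).2
      · -- j' = j
        rw [hρρ] at hP₀i
        exact hP₀i
      · -- j' = j'' : contradiction
        exfalso
        have h1 := (hP₀ i j' hP₀i).2
        have h2 := (hP₀ j j'' hP₀j).2
        rw [hρρ] at h1
        rw [h1] at h2
        exact (ne_of_lt hij) (Sum.inr_injective h2)
    -- step 4: P = P₀, contradiction with t ≠ t₀
    have hPP : P = P₀ := by
      funext i
      cases hPi : P i with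
      | inl k => rw [hstep1 i k hPi]
      | inr j =>
        obtain ⟨hji, hPj⟩ := hPdat i j hPi
        rcases lt_or_gt_of_ne (Ne.symm hji) with hlt2 | hlt2
        · rw [hstep3 i j hPi hlt2]
        · rw [(hP₀ j i (hstep3 j i hPj hlt2)).2]
    exact hne (Subtype.ext (by rw [htP, hPP, ← ht₀]))
  -- conclude
  have h0 := congrArg Lev hl
  rw [map_zero, Finsupp.linearCombination_apply, map_finsuppSum] at h0
  have h0' : (l.sum fun t a => a * evP (t : (Fin r → Fin D) → ℝ) u) = 0 := by
    rw [← h0]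
    apply Finsupp.sum_congr
    intro t _
    rw [map_smul, hLev_apply, smul_eq_mul]
  rw [Finsupp.sum_eq_single t₀
    (fun b hb hbne => by rw [hev_other b hb hbne, mul_zero])
    (fun _ => by rw [zero_mul])] at h0'
  rw [hev_t₀, mul_one] at h0'
  exact Finsupp.mem_support_iff.mp ht₀sup h0'
end

section
/- For all real numbers 0 ≤ q ≤ p ≤ P, all Λ > 0, and every natural number k, there exists a constant C_k > 0 (depending only on k) such that ∫_Λ^∞ (log₊(P/λ))^k / ((λ+p)(λ+q)) dλ ≤ C_k (1 + (log₊(P/(Λ+q)))^{k+1}) / (Λ + p + q), where log₊ x := log max(1,x). -/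
noncomputable def logPlus (x : ℝ) : ℝ := Real.log (max 1 x)

open Real MeasureTheory Set

lemma logPlus_nonneg (x : ℝ) : 0 ≤ logPlus x := Real.log_nonneg (le_max_left 1 x)

lemma logPlus_mono {x y : ℝ} (h : x ≤ y) : logPlus x ≤ logPlus y :=
  Real.log_le_log (by positivity) (max_le_max le_rfl h)

lemma logPlus_mul_le {x y : ℝ} (hx : 0 ≤ x) (hy : 0 ≤ y) :
    logPlus (x * y) ≤ logPlus x + logPlus y := by
  unfold logPlus
  have h1 : (1:ℝ) ≤ max 1 x := le_max_left 1 x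
  have h2 : (1:ℝ) ≤ max 1 y := le_max_left 1 y
  rw [← Real.log_mul (by positivity) (by positivity)]
  apply Real.log_le_log (by positivity)
  apply max_le
  · nlinarith
  · exact mul_le_mul (le_max_right 1 x) (le_max_right 1 y) hy (by linarith)

lemma logPlus_two_mul_le {x : ℝ} (hx : 0 ≤ x) :
    logPlus (2 * x) ≤ Real.log 2 + logPlus x := by
  have := logPlus_mul_le (by norm_num : (0:ℝ) ≤ 2) hx
  have h2 : logPlus 2 = Real.log 2 := by unfold logPlus; norm_num
  linarith

lemma logPlus_pow_rpow_bound (k : ℕ) {y : ℝ} (hy : 1 ≤ y) :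
    logPlus y ^ k ≤ ((2 * (k:ℝ)) ^ k + 1) * y ^ ((1:ℝ)/2) := by
  have hy0 : 0 < y := lt_of_lt_of_le one_pos hy
  have hy12 : (1:ℝ) ≤ y ^ ((1:ℝ)/2) := Real.one_le_rpow hy (by norm_num)
  have hL : logPlus y = Real.log y := by unfold logPlus; rw [max_eq_right hy]
  rcases Nat.eq_zero_or_pos k with hk | hk
  · subst hk; simp; nlinarith
  · have hk0 : (k:ℝ) ≠ 0 := Nat.cast_ne_zero.mpr hk.ne'
    have hkpos : (0:ℝ) < k := Nat.cast_pos.mpr hk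
    -- log y ≤ 2k * y^(1/(2k))
    have key : Real.log y ≤ 2 * (k:ℝ) * y ^ ((1:ℝ)/(2*k)) := by
      have h1 : Real.log (y ^ ((1:ℝ)/(2*k))) = (1/(2*k)) * Real.log y :=
        Real.log_rpow hy0 _
      have h2 : Real.log (y ^ ((1:ℝ)/(2*k))) ≤ y ^ ((1:ℝ)/(2*k)) := by
        have := Real.log_le_sub_one_of_pos (Real.rpow_pos_of_pos hy0 ((1:ℝ)/(2*k)))
        linarith
      have h3 : (0:ℝ) < 2*k := by positivity
      calc Real.log y = 2*(k:ℝ) * ((1/(2*k)) * Real.log y) := by field_simp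
        _ = 2*(k:ℝ) * Real.log (y ^ ((1:ℝ)/(2*k))) := by rw [h1]
        _ ≤ 2*(k:ℝ) * y ^ ((1:ℝ)/(2*k)) := by nlinarith
    have hlog0 : 0 ≤ Real.log y := Real.log_nonneg hy
    have step : logPlus y ^ k ≤ (2*(k:ℝ) * y ^ ((1:ℝ)/(2*k))) ^ k := by
      rw [hL]; exact pow_le_pow_left₀ hlog0 key k
    have expand : (2*(k:ℝ) * y ^ ((1:ℝ)/(2*k))) ^ k
        = (2*(k:ℝ))^k * y ^ ((1:ℝ)/2) := by
      rw [mul_pow, ← Real.rpow_natCast (y ^ ((1:ℝ)/(2*k))) k, ← Real.rpow_mul hy0.le]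
      congr 2
      field_simp
    have : (0:ℝ) ≤ y ^ ((1:ℝ)/2) := by positivity
    calc logPlus y ^ k ≤ (2*(k:ℝ))^k * y ^ ((1:ℝ)/2) := by rw [← expand]; exact step
      _ ≤ ((2*(k:ℝ))^k + 1) * y ^ ((1:ℝ)/2) := by nlinarith

lemma add_pow_le_two_pow {a b : ℝ} (ha : 0 ≤ a) (hb : 0 ≤ b) (k : ℕ) :
    (a + b) ^ k ≤ 2 ^ k * (a ^ k + b ^ k) := by
  have h1 : a + b ≤ 2 * max a b := by
    rcases le_total a b with h | h
    · rw [max_eq_right h]; linarith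
    · rw [max_eq_left h]; linarith
  calc (a+b)^k ≤ (2 * max a b)^k := pow_le_pow_left₀ (by positivity) h1 k
    _ = 2^k * (max a b)^k := mul_pow 2 _ k
    _ ≤ 2^k * (a^k + b^k) := by
        rcases le_total a b with h | h
        · rw [max_eq_right h]
          have := pow_nonneg ha k
          have h2 : (0:ℝ) < 2^k := by positivity
          nlinarith
        · rw [max_eq_left h]
          have := pow_nonneg hb k
          have h2 : (0:ℝ) < 2^k := by positivity
          nlinarith

lemma pow_le_one_add_pow_succ {M : ℝ} (hM : 0 ≤ M) (k : ℕ) : M ^ k ≤ 1 + M ^ (k+1) := by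
  rcases le_total M 1 with h | h
  · have : M ^ k ≤ 1 := pow_le_one₀ hM h
    have : (0:ℝ) ≤ M ^ (k+1) := pow_nonneg hM _
    linarith
  · have h1 : M ^ k ≤ M ^ (k+1) := pow_le_pow_right₀ h (Nat.le_succ k)
    have : (0:ℝ) ≤ M ^ k := pow_nonneg hM _
    linarith
set_option maxHeartbeats 2000000 in
theorem stmt_3 (k : ℕ) :
    ∃ C : ℝ, 0 < C ∧ ∀ p q P Λ : ℝ, 0 ≤ q → q ≤ p → p ≤ P → 0 < Λ →
      (∫ l in Set.Ioi Λ, (logPlus (P / l)) ^ k / ((l + p) * (l + q))) ≤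
        C * (1 + (logPlus (P / (Λ + q))) ^ (k + 1)) / (Λ + p + q) := by
  obtain ⟨c, hc⟩ : ∃ c : ℝ, c = (2*(k:ℝ))^k + 1 := ⟨_, rfl⟩
  have hc0 : 0 < c := by rw [hc]; positivity
  have hC0 : (0:ℝ) < 4^(k+1) + 2^(k+2)*c + 2^(k+2) + 3 := by
    have h1 : (0:ℝ) < 2^(k+2)*c := mul_pos (by positivity) hc0
    have h2 : (0:ℝ) < 4^(k+1) := by positivity
    have h3 : (0:ℝ) < 2^(k+2) := by positivity
    linarith
  refine ⟨4^(k+1) + 2^(k+2)*c + 2^(k+2) + 3, hC0, ?_⟩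
  intro p q P Λ hq hqp hpP hΛ
  have hp : (0:ℝ) ≤ p := hq.trans hqp
  have hP : (0:ℝ) ≤ P := hp.trans hpP
  obtain ⟨M, hM⟩ : ∃ M : ℝ, M = logPlus (P / (Λ + q)) := ⟨_, rfl⟩
  obtain ⟨D, hD⟩ : ∃ D : ℝ, D = Λ + p + q := ⟨_, rfl⟩
  rw [← hM, ← hD]
  have hM0 : 0 ≤ M := hM ▸ logPlus_nonneg _
  obtain ⟨B, hB⟩ : ∃ B : ℝ, B = Real.log 2 + M := ⟨_, rfl⟩
  have hlog2 : (0:ℝ) ≤ Real.log 2 := Real.log_nonneg (by norm_num)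
  have hB0 : 0 ≤ B := by rw [hB]; linarith
  have hD0 : 0 < D := by rw [hD]; linarith
  obtain ⟨T, hT⟩ : ∃ T : ℝ, T = max Λ P := ⟨_, rfl⟩
  obtain ⟨m, hm⟩ : ∃ m : ℝ, m = min (max Λ q) T := ⟨_, rfl⟩
  have hΛT : Λ ≤ T := hT ▸ le_max_left _ _
  have hΛm : Λ ≤ m := by rw [hm]; exact le_min (le_max_left _ _) (hT ▸ le_max_left _ _)
  have hmT : m ≤ T := hm ▸ min_le_right _ _
  have hT0 : 0 < T := lt_of_lt_of_le hΛ hΛT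
  have hm0 : 0 < m := lt_of_lt_of_le hΛ hΛm
  obtain ⟨s, hs⟩ : ∃ s : ℝ, s = q ^ ((1:ℝ)/2) := ⟨_, rfl⟩
  have hs0 : 0 ≤ s := hs ▸ Real.rpow_nonneg hq _
  obtain ⟨a₁, ha₁⟩ : ∃ a : ℝ, a = 2/D * 2^k * (B^k/q) := ⟨_, rfl⟩
  obtain ⟨a₂, ha₂⟩ : ∃ a : ℝ, a = 2/D * 2^k * c / s := ⟨_, rfl⟩
  obtain ⟨b₂, hb₂⟩ : ∃ b : ℝ, b = 2/D * B^k := ⟨_, rfl⟩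
  have hBk0 : (0:ℝ) ≤ B ^ k := pow_nonneg hB0 k
  have ha₁0 : 0 ≤ a₁ := by rw [ha₁]; positivity
  have ha₂0 : 0 ≤ a₂ := by
    rw [ha₂]
    apply div_nonneg _ hs0
    exact mul_nonneg (mul_nonneg (by positivity) (by positivity)) hc0.le
  have hb₂0 : 0 ≤ b₂ := by rw [hb₂]; positivity
  obtain ⟨F1, hF1⟩ : ∃ F : ℝ → ℝ, F = fun x => a₁ + a₂ * x ^ (-(1:ℝ)/2) := ⟨_, rfl⟩
  obtain ⟨F2, hF2⟩ : ∃ F : ℝ → ℝ, F = fun x => b₂ * (1/x) := ⟨_, rfl⟩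
  obtain ⟨F3, hF3⟩ : ∃ F : ℝ → ℝ, F = fun x => x ^ (-(2:ℝ)) := ⟨_, rfl⟩
  obtain ⟨g, hg⟩ : ∃ g : ℝ → ℝ, g = fun x => (Set.Ioc Λ m).indicator F1 x +
      ((Set.Ioc m T).indicator F2 x + (Set.Ioi T).indicator F3 x) := ⟨_, rfl⟩
  -- integrability
  have hint1 : MeasureTheory.IntegrableOn F1 (Set.Ioc Λ m) := by
    rw [hF1]
    apply MeasureTheory.Integrable.add
    · exact MeasureTheory.integrableOn_const measure_Ioc_lt_top.ne
    · exact ((intervalIntegrable_iff_integrableOn_Ioc_of_le hΛm).mp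
        (intervalIntegral.intervalIntegrable_rpow' (by norm_num))).const_mul a₂
  have hint2 : MeasureTheory.IntegrableOn F2 (Set.Ioc m T) := by
    have hcont : ContinuousOn F2 (Set.Icc m T) := by
      rw [hF2]
      apply ContinuousOn.mul continuousOn_const
      apply ContinuousOn.div continuousOn_const continuousOn_id
      exact fun x hx => ne_of_gt (lt_of_lt_of_le hm0 hx.1)
    exact (hcont.integrableOn_Icc).mono_set Set.Ioc_subset_Icc_self
  have hint3 : MeasureTheory.IntegrableOn F3 (Set.Ioi T) := by
    rw [hF3]; exact integrableOn_Ioi_rpow_of_lt (by norm_num) hT0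
  have hgi : MeasureTheory.Integrable g (MeasureTheory.volume.restrict (Set.Ioi Λ)) := by
    rw [hg]
    exact ((hint1.integrable_indicator measurableSet_Ioc).restrict).add
      (((hint2.integrable_indicator measurableSet_Ioc).restrict).add
        ((hint3.integrable_indicator measurableSet_Ioi).restrict))
  -- nonnegativity of f
  have hf0 : 0 ≤ᵐ[MeasureTheory.volume.restrict (Set.Ioi Λ)]
      fun l => (logPlus (P / l)) ^ k / ((l + p) * (l + q)) := by
    filter_upwards [MeasureTheory.ae_restrict_mem measurableSet_Ioi] with x hx
    have hx0 : (0:ℝ) < x := lt_trans hΛ hx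
    have h1 : 0 ≤ logPlus (P / x) ^ k := pow_nonneg (logPlus_nonneg _) k
    have h2 : (0:ℝ) < (x + p) * (x + q) := by nlinarith
    positivity
  -- pointwise domination
  have hfg : ∀ x ∈ Set.Ioi Λ, (logPlus (P / x)) ^ k / ((x + p) * (x + q)) ≤ g x := by
    intro x hx
    have hxΛ : Λ < x := hx
    have hx0 : 0 < x := lt_trans hΛ hxΛ
    have hxp : D ≤ 2*(x+p) := by rw [hD]; linarith
    have hL0 : 0 ≤ logPlus (P / x) := logPlus_nonneg _
    have hLk0 : 0 ≤ logPlus (P / x) ^ k := pow_nonneg hL0 k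
    have hnn1 : 0 ≤ (Set.Ioc Λ m).indicator F1 x := by
      apply Set.indicator_nonneg
      intro y hy
      have hy0 : (0:ℝ) < y := lt_trans hΛ hy.1
      rw [hF1]
      have : (0:ℝ) ≤ y ^ (-(1:ℝ)/2) := Real.rpow_nonneg hy0.le _
      nlinarith
    have hnn2 : 0 ≤ (Set.Ioc m T).indicator F2 x := by
      apply Set.indicator_nonneg
      intro y hy
      have hy0 : (0:ℝ) < y := lt_trans hm0 hy.1
      rw [hF2]; positivity
    have hnn3 : 0 ≤ (Set.Ioi T).indicator F3 x := by
      apply Set.indicator_nonneg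
      intro y hy
      have hy0 : (0:ℝ) < y := lt_trans hT0 hy
      rw [hF3]; positivity
    rcases le_or_gt x m with hxm | hxm
    · -- case A : x ∈ Ioc Λ m
      have hqΛ : Λ < q := by
        by_contra hcon
        push_neg at hcon
        have hmΛ : m = Λ := by rw [hm, max_eq_left hcon, min_eq_left hΛT]
        rw [hmΛ] at hxm; exact absurd hxm (not_le.mpr hxΛ)
      have hq0 : 0 < q := lt_trans hΛ hqΛ
      have hxq : x ≤ q := hxm.trans
        ((hm ▸ min_le_left _ _ : m ≤ max Λ q).trans (le_of_eq (max_eq_right hqΛ.le)))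
      have hs0' : 0 < s := hs ▸ Real.rpow_pos_of_pos hq0 _
      have hss : s * s = q := by
        rw [hs, ← Real.rpow_add hq0]; norm_num
      have hPx : logPlus (P/x) ≤ B + logPlus (q/x) := by
        have hsplit : P/x = (P/q)*(q/x) := by field_simp
        have h1 : logPlus (P/x) ≤ logPlus (P/q) + logPlus (q/x) := by
          rw [hsplit]; exact logPlus_mul_le (by positivity) (by positivity)
        have h2 : logPlus (P/q) ≤ B := by
          have hle : P/q ≤ 2*(P/(Λ+q)) := by
            rw [show 2*(P/(Λ+q)) = (2*P)/(Λ+q) by ring, div_le_div_iff₀ hq0 (by linarith)]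
            nlinarith [mul_le_mul_of_nonneg_left (by linarith : Λ + q ≤ 2*q) hP]
          calc logPlus (P/q) ≤ logPlus (2*(P/(Λ+q))) := logPlus_mono hle
            _ ≤ Real.log 2 + logPlus (P/(Λ+q)) := logPlus_two_mul_le (by positivity)
            _ = B := by rw [hB, hM]
        linarith
      have hyx : (1:ℝ) ≤ q/x := (one_le_div hx0).mpr hxq
      have hnum : logPlus (P/x) ^ k ≤ 2^k * (B^k + c * (s * x^(-(1:ℝ)/2))) := by
        have s1 : logPlus (P/x)^k ≤ (B + logPlus (q/x))^k :=
          pow_le_pow_left₀ hL0 hPx k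
        have s2 : (B + logPlus (q/x))^k ≤ 2^k * (B^k + logPlus (q/x)^k) :=
          add_pow_le_two_pow hB0 (logPlus_nonneg _) k
        have s3 : logPlus (q/x)^k ≤ c * (q/x)^((1:ℝ)/2) := by
          rw [hc]; exact logPlus_pow_rpow_bound k hyx
        have s4 : (q/x)^((1:ℝ)/2) = s * x^(-(1:ℝ)/2) := by
          rw [Real.div_rpow hq hx0.le, hs, show (-(1:ℝ)/2) = -((1:ℝ)/2) by norm_num,
            Real.rpow_neg hx0.le, div_eq_mul_inv]
        have h2k : (0:ℝ) < 2^k := by positivity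
        have s5 : (2:ℝ)^k * logPlus (q/x)^k ≤ 2^k * (c * (q/x)^((1:ℝ)/2)) :=
          mul_le_mul_of_nonneg_left s3 h2k.le
        rw [mul_add] at s2
        rw [← s4, mul_add]
        linarith
      have hden : D/2 * q ≤ (x+p)*(x+q) :=
        mul_le_mul (by linarith) (by linarith) hq (by linarith)
      have hdpos : (0:ℝ) < D/2 * q := by positivity
      have step : logPlus (P/x)^k / ((x+p)*(x+q))
          ≤ (2^k * (B^k + c * (s * x^(-(1:ℝ)/2)))) / (D/2 * q) :=
        div_le_div₀ (mul_nonneg (by positivity) (add_nonneg hBk0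
          (mul_nonneg hc0.le (mul_nonneg hs0 (Real.rpow_nonneg hx0.le _))))) hnum hdpos hden
      have heq : (2^k * (B^k + c * (s * x^(-(1:ℝ)/2)))) / (D/2 * q) = F1 x := by
        simp only [hF1]
        rw [ha₁, ha₂, ← hss]
        field_simp
      have hmem : x ∈ Set.Ioc Λ m := ⟨hxΛ, hxm⟩
      simp only [hg]
      rw [Set.indicator_of_mem hmem]
      have hstep2 : logPlus (P/x)^k / ((x+p)*(x+q)) ≤ F1 x := heq ▸ step
      linarith
    · rcases le_or_gt x T with hxT | hxT
      · -- case B : x ∈ Ioc m T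
        have hmax : m = max Λ q := by
          rcases le_total (max Λ q) T with h | h
          · rw [hm, min_eq_left h]
          · exfalso
            have hmm : m = T := by rw [hm, min_eq_right h]
            rw [hmm] at hxm; linarith
        have hxq : q < x := lt_of_le_of_lt (le_max_right Λ q) (hmax ▸ hxm)
        have hkey : logPlus (P/x) ≤ B := by
          have hle : P/x ≤ 2*(P/(Λ+q)) := by
            rw [show 2*(P/(Λ+q)) = (2*P)/(Λ+q) by ring, div_le_div_iff₀ hx0 (by linarith)]
            nlinarith [mul_le_mul_of_nonneg_left (by linarith : Λ + q ≤ 2*x) hP]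
          calc logPlus (P/x) ≤ logPlus (2*(P/(Λ+q))) := logPlus_mono hle
            _ ≤ Real.log 2 + logPlus (P/(Λ+q)) := logPlus_two_mul_le (by positivity)
            _ = B := by rw [hB, hM]
        have hnum : logPlus (P/x)^k ≤ B^k := pow_le_pow_left₀ hL0 hkey k
        have hden : D/2 * x ≤ (x+p)*(x+q) :=
          mul_le_mul (by linarith) (by linarith) hx0.le (by linarith)
        have hdpos : (0:ℝ) < D/2 * x := by positivity
        have step : logPlus (P/x)^k / ((x+p)*(x+q)) ≤ B^k / (D/2 * x) :=
          div_le_div₀ hBk0 hnum hdpos hden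
        have heq : B^k / (D/2 * x) = F2 x := by
          simp only [hF2]
          rw [hb₂]
          field_simp
        have hmem : x ∈ Set.Ioc m T := ⟨hxm, hxT⟩
        simp only [hg]
        rw [Set.indicator_of_mem hmem]
        have hstep2 : logPlus (P/x)^k / ((x+p)*(x+q)) ≤ F2 x := heq ▸ step
        linarith
      · -- case C : x ∈ Ioi T
        have hPx : P ≤ x := le_trans (hT ▸ le_max_right Λ P) hxT.le
        have hLzero : logPlus (P/x) = 0 := by
          unfold logPlus
          rw [max_eq_left ((div_le_one hx0).mpr hPx), Real.log_one]
        have hnum : logPlus (P/x)^k ≤ 1 := by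
          rw [hLzero]; exact pow_le_one₀ le_rfl zero_le_one
        have hden : x * x ≤ (x+p)*(x+q) :=
          mul_le_mul (by linarith) (by linarith) hx0.le (by linarith)
        have step : logPlus (P/x)^k / ((x+p)*(x+q)) ≤ 1 / (x*x) :=
          div_le_div₀ zero_le_one hnum (by positivity) hden
        have heq : (1:ℝ) / (x*x) = F3 x := by
          simp only [hF3]
          rw [show (-(2:ℝ)) = -((2:ℕ):ℝ) by norm_num, Real.rpow_neg hx0.le,
            Real.rpow_natCast, pow_two, one_div]
        have hmem : x ∈ Set.Ioi T := hxT
        simp only [hg]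
        rw [Set.indicator_of_mem hmem]
        have hstep2 : logPlus (P/x)^k / ((x+p)*(x+q)) ≤ F3 x := heq ▸ step
        linarith
  -- monotonicity of the integral
  have hmono : (∫ l in Set.Ioi Λ, (logPlus (P / l)) ^ k / ((l + p) * (l + q)))
      ≤ ∫ l in Set.Ioi Λ, g l := by
    refine MeasureTheory.integral_mono_of_nonneg hf0 hgi ?_
    filter_upwards [MeasureTheory.ae_restrict_mem measurableSet_Ioi] with x hx
    exact hfg x hx
  -- splitting the majorant integral
  have hsub1 : Set.Ioc Λ m ⊆ Set.Ioi Λ := Set.Ioc_subset_Ioi_self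
  have hsub2 : Set.Ioc m T ⊆ Set.Ioi Λ := fun x hx => lt_of_le_of_lt hΛm hx.1
  have hsub3 : Set.Ioi T ⊆ Set.Ioi Λ := Set.Ioi_subset_Ioi hΛT
  have hsplit : (∫ l in Set.Ioi Λ, g l) = (∫ l in Set.Ioc Λ m, F1 l)
      + ((∫ l in Set.Ioc m T, F2 l) + (∫ l in Set.Ioi T, F3 l)) := by
    simp only [hg]
    have e1int : MeasureTheory.Integrable (fun x => (Set.Ioc Λ m).indicator F1 x)
        (MeasureTheory.volume.restrict (Set.Ioi Λ)) :=
      (hint1.integrable_indicator measurableSet_Ioc).restrict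
    have e2int : MeasureTheory.Integrable (fun x => (Set.Ioc m T).indicator F2 x)
        (MeasureTheory.volume.restrict (Set.Ioi Λ)) :=
      (hint2.integrable_indicator measurableSet_Ioc).restrict
    have e3int : MeasureTheory.Integrable (fun x => (Set.Ioi T).indicator F3 x)
        (MeasureTheory.volume.restrict (Set.Ioi Λ)) :=
      (hint3.integrable_indicator measurableSet_Ioi).restrict
    have e23int : MeasureTheory.Integrable
        (fun x => (Set.Ioc m T).indicator F2 x + (Set.Ioi T).indicator F3 x)
        (MeasureTheory.volume.restrict (Set.Ioi Λ)) := e2int.add e3int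
    rw [MeasureTheory.integral_add e1int e23int]
    rw [MeasureTheory.integral_add e2int e3int]
    rw [MeasureTheory.setIntegral_indicator measurableSet_Ioc,
      MeasureTheory.setIntegral_indicator measurableSet_Ioc,
      MeasureTheory.setIntegral_indicator measurableSet_Ioi,
      Set.inter_eq_self_of_subset_right hsub1,
      Set.inter_eq_self_of_subset_right hsub2,
      Set.inter_eq_self_of_subset_right hsub3]
  -- bounds on the three integrals
  have I1 : (∫ l in Set.Ioc Λ m, F1 l) ≤ 2/D * 2^k * (B^k + 2*c) := by
    simp only [hF1]
    rw [← intervalIntegral.integral_of_le hΛm]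
    rw [intervalIntegral.integral_add (intervalIntegrable_const)
      ((intervalIntegral.intervalIntegrable_rpow' (by norm_num)).const_mul a₂)]
    rw [intervalIntegral.integral_const, intervalIntegral.integral_const_mul,
      integral_rpow (Or.inl (by norm_num))]
    have hexp : -(1:ℝ)/2 + 1 = 1/2 := by norm_num
    rw [hexp]
    rcases le_or_gt q Λ with hqΛ | hqΛ
    · have hmΛ : m = Λ := by rw [hm, max_eq_left hqΛ, min_eq_left hΛT]
      rw [hmΛ]
      simp only [sub_self, zero_smul, zero_div, mul_zero, zero_add, add_zero]
      have h1 : (0:ℝ) ≤ 2/D * 2^k := by positivity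
      nlinarith
    · have hq0 : 0 < q := lt_trans hΛ hqΛ
      have hs0' : 0 < s := hs ▸ Real.rpow_pos_of_pos hq0 _
      have hmq : m ≤ q := (hm ▸ min_le_left _ _ : m ≤ max Λ q).trans
        (le_of_eq (max_eq_right hqΛ.le))
      have e1 : (m - Λ) • a₁ ≤ 2/D * 2^k * B^k := by
        rw [smul_eq_mul]
        have h1 : (m - Λ) * a₁ ≤ q * a₁ := mul_le_mul_of_nonneg_right (by linarith) ha₁0
        have h2 : q * a₁ = 2/D * 2^k * B^k := by
          rw [ha₁]; field_simp
        linarith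
      have hm12 : m ^ ((1:ℝ)/2) ≤ s := by
        rw [hs]; exact Real.rpow_le_rpow hm0.le hmq (by norm_num)
      have hΛ12 : 0 ≤ Λ ^ ((1:ℝ)/2) := Real.rpow_nonneg hΛ.le _
      have e2 : a₂ * ((m ^ ((1:ℝ)/2) - Λ ^ ((1:ℝ)/2)) / ((1:ℝ)/2)) ≤ 2/D * 2^k * (2*c) := by
        have h3 : (m ^ ((1:ℝ)/2) - Λ ^ ((1:ℝ)/2)) / ((1:ℝ)/2) ≤ 2*s := by
          rw [div_le_iff₀ (by norm_num : (0:ℝ) < 1/2)]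
          nlinarith
        have h4 : a₂ * (2*s) = 2/D * 2^k * (2*c) := by
          rw [ha₂]; field_simp
        nlinarith
      have hsum : 2/D * 2^k * (B^k + 2*c) = 2/D * 2^k * B^k + 2/D * 2^k * (2*c) := by ring
      linarith
  have I2 : (∫ l in Set.Ioc m T, F2 l) ≤ 2/D * B^(k+1) := by
    simp only [hF2]
    rw [← intervalIntegral.integral_of_le hmT, intervalIntegral.integral_const_mul,
      integral_one_div (Set.notMem_uIcc_of_lt hm0 hT0)]
    have hZ : (1:ℝ) ≤ max 1 (P/(Λ+q)) := le_max_left _ _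
    have hTm0 : 0 < T/m := div_pos hT0 hm0
    have hdiv : T/m ≤ 2 * max 1 (P/(Λ+q)) := by
      rcases le_or_gt P Λ with hPΛ | hPΛ
      · have hTΛ : T = Λ := hT ▸ max_eq_left hPΛ
        have hmm : m = Λ := le_antisymm (by rw [hm, hTΛ]; exact min_le_right _ _) hΛm
        rw [hTΛ, hmm, div_self hΛ.ne']
        linarith
      · have hTP : T = P := hT ▸ max_eq_right hPΛ.le
        have hP0 : 0 < P := lt_trans hΛ hPΛ
        have h2m : Λ + q ≤ 2 * m := by
          rw [hm]
          rcases le_total (max Λ q) T with h | h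
          · rw [min_eq_left h]
            rcases le_total Λ q with h' | h'
            · rw [max_eq_right h']; linarith
            · rw [max_eq_left h']; linarith
          · rw [min_eq_right h, hT]
            rcases le_total Λ P with h'' | h''
            · rw [max_eq_right h'']; linarith
            · rw [max_eq_left h'']; linarith
        calc T/m = P/m := by rw [hTP]
          _ ≤ 2*P/(Λ+q) := by
              rw [div_le_div_iff₀ hm0 (by linarith)]
              nlinarith [mul_le_mul_of_nonneg_left h2m hP]
          _ ≤ 2 * max 1 (P/(Λ+q)) := by
              have h5 : P/(Λ+q) ≤ max 1 (P/(Λ+q)) := le_max_right _ _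
              rw [mul_div_assoc]; linarith
    have hTm : Real.log (T/m) ≤ B := by
      calc Real.log (T/m) ≤ Real.log (2 * max 1 (P/(Λ+q))) := Real.log_le_log hTm0 hdiv
        _ = Real.log 2 + Real.log (max 1 (P/(Λ+q))) :=
            Real.log_mul (by norm_num) (by positivity)
        _ = B := by rw [hB, hM]; rfl
    have h6 : b₂ * Real.log (T/m) ≤ b₂ * B := mul_le_mul_of_nonneg_left hTm hb₂0
    have h7 : b₂ * B = 2/D * B^(k+1) := by rw [hb₂, pow_succ]; ring
    linarith
  have I3 : (∫ l in Set.Ioi T, F3 l) ≤ 3/D := by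
    simp only [hF3]
    rw [integral_Ioi_rpow_of_lt (by norm_num) hT0]
    have hexp : (-(2:ℝ)) + 1 = -1 := by norm_num
    rw [hexp, Real.rpow_neg_one]
    have h8 : -T⁻¹ / (-1:ℝ) = T⁻¹ := by ring
    rw [h8, inv_eq_one_div, div_le_div_iff₀ hT0 hD0]
    have h1 : Λ ≤ T := hΛT
    have h2 : P ≤ T := hT ▸ le_max_right _ _
    rw [hD]; nlinarith
  -- final arithmetic
  have hX1 : (1:ℝ) ≤ 1 + M^(k+1) := by nlinarith [pow_nonneg hM0 (k+1)]
  have hBM : B ≤ 1 + M := by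
    have := Real.log_le_sub_one_of_pos (by norm_num : (0:ℝ) < 2)
    rw [hB]; linarith
  have hBk : B^k ≤ 2^(k+1) * (1 + M^(k+1)) := by
    have c1 : B^k ≤ (1+M)^k := pow_le_pow_left₀ hB0 hBM k
    have c2 : (1+M)^k ≤ 2^k * (1^k + M^k) := add_pow_le_two_pow zero_le_one hM0 k
    have c3 : M^k ≤ 1 + M^(k+1) := pow_le_one_add_pow_succ hM0 k
    have h2k : (0:ℝ) ≤ 2^k := by positivity
    have hMk1 : (0:ℝ) ≤ M^(k+1) := pow_nonneg hM0 _
    have : (2:ℝ)^(k+1) = 2^k * 2 := pow_succ 2 k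
    rw [one_pow] at c2
    nlinarith [mul_le_mul_of_nonneg_left c3 h2k]
  have hBk1 : B^(k+1) ≤ 2^(k+1) * (1 + M^(k+1)) := by
    have c1 : B^(k+1) ≤ (1+M)^(k+1) := pow_le_pow_left₀ hB0 hBM (k+1)
    have c2 : (1+M)^(k+1) ≤ 2^(k+1) * (1^(k+1) + M^(k+1)) :=
      add_pow_le_two_pow zero_le_one hM0 (k+1)
    rw [one_pow] at c2
    linarith
  have hN : 2^(k+1)*B^k + 2^(k+2)*c + 2*B^(k+1) + 3
      ≤ (4^(k+1) + 2^(k+2)*c + 2^(k+2) + 3) * (1 + M^(k+1)) := by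
    have hA0 : (0:ℝ) < 2^(k+1) := by positivity
    have hA3 : (4:ℝ)^(k+1) = 2^(k+1)*2^(k+1) := by rw [← mul_pow]; norm_num
    have hA2 : (2:ℝ)^(k+2) = 2*2^(k+1) := by ring
    have hMk1 : (0:ℝ) ≤ M^(k+1) := pow_nonneg hM0 _
    rw [hA3, hA2]
    nlinarith [mul_le_mul_of_nonneg_left hBk hA0.le, hBk1,
      mul_nonneg (mul_nonneg hA0.le hc0.le) hMk1, mul_nonneg hA0.le hMk1]
  have hfinal : 2/D * 2^k * (B^k + 2*c) + (2/D * B^(k+1) + 3/D)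
      ≤ (4^(k+1) + 2^(k+2)*c + 2^(k+2) + 3) * (1 + M^(k+1)) / D := by
    have hLHS : 2/D * 2^k * (B^k + 2*c) + (2/D * B^(k+1) + 3/D)
        = (2^(k+1)*B^k + 2^(k+2)*c + 2*B^(k+1) + 3)/D := by
      field_simp
      ring
    rw [hLHS]
    exact (div_le_div_iff_of_pos_right hD0).mpr hN
  calc (∫ l in Set.Ioi Λ, (logPlus (P / l)) ^ k / ((l + p) * (l + q)))
      ≤ ∫ l in Set.Ioi Λ, g l := hmono
    _ = (∫ l in Set.Ioc Λ m, F1 l) + ((∫ l in Set.Ioc m T, F2 l) + (∫ l in Set.Ioi T, F3 l)) :=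
        hsplit
    _ ≤ 2/D * 2^k * (B^k + 2*c) + (2/D * B^(k+1) + 3/D) := add_le_add I1 (add_le_add I2 I3)
    _ ≤ (4^(k+1) + 2^(k+2)*c + 2^(k+2) + 3) * (1 + M^(k+1)) / D := hfinal
end

section
/- For all p, q ∈ ℝ⁴, Λ' > 0, and 0 ≤ η ≤ Λ', ∫_0^1 |p| / (Λ' + |tp + q|) dt ≤ 2 (log 4 + log₊(|p|/(Λ'+η))). -/
open intervalIntegral MeasureTheory

lemma clamp_abs (t s : ℝ) (ht0 : 0 ≤ t) (ht1 : t ≤ 1) :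
    |t - min 1 (max 0 s)| ≤ |t - s| := by
  rcases le_total s 0 with h | h
  · rw [max_eq_left h, min_eq_right (by norm_num : (0:ℝ) ≤ 1), sub_zero,
      abs_of_nonneg ht0, abs_of_nonneg (by linarith)]
    linarith
  · rcases le_total 1 s with h1 | h1
    · rw [max_eq_right h, min_eq_left h1, abs_of_nonpos (by linarith),
        abs_of_nonpos (by linarith)]
      linarith
    · rw [max_eq_right h, min_eq_right h1]

lemma norm_line_lower (p q : EuclideanSpace ℝ (Fin 4)) (hp : p ≠ 0) (t : ℝ) :
    ‖p‖ * |t - (-(inner ℝ p q : ℝ) / ‖p‖ ^ 2)| ≤ ‖t • p + q‖ := by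
  set s : ℝ := -(inner ℝ p q : ℝ) / ‖p‖ ^ 2 with hs
  have hpn : (0:ℝ) < ‖p‖ := norm_pos_iff.mpr hp
  have key : ‖p‖ ^ 2 * s = -(inner ℝ p q : ℝ) := by
    rw [hs]; field_simp
  have expand : ‖t • p + q‖ ^ 2 = t ^ 2 * ‖p‖ ^ 2 + 2 * t * (inner ℝ p q : ℝ) + ‖q‖ ^ 2 := by
    rw [norm_add_sq_real, real_inner_smul_left, norm_smul]
    simp [Real.norm_eq_abs, mul_pow, sq_abs]
    ring
  have CS : (inner ℝ p q : ℝ) * inner ℝ p q ≤ (‖p‖ * ‖p‖) * (‖q‖ * ‖q‖) := by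
    have h := real_inner_mul_inner_self_le p q
    rwa [real_inner_self_eq_norm_mul_norm, real_inner_self_eq_norm_mul_norm] at h
  have h2 : (‖p‖ ^ 2 * s) ^ 2 ≤ ‖p‖ ^ 2 * ‖q‖ ^ 2 := by
    rw [key]; nlinarith [CS]
  have hAs2 : ‖p‖ ^ 2 * s ^ 2 ≤ ‖q‖ ^ 2 := by
    nlinarith [h2, mul_pos hpn hpn, sq_nonneg s]
  have h3 : ‖p‖ ^ 2 * (t - s) ^ 2 =
      ‖p‖ ^ 2 * t ^ 2 + 2 * t * (inner ℝ p q : ℝ) + ‖p‖ ^ 2 * s ^ 2 := by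
    linear_combination (-2 * t) * key
  have hsq : (‖p‖ * |t - s|) ^ 2 ≤ ‖t • p + q‖ ^ 2 := by
    rw [mul_pow, sq_abs, expand]
    nlinarith [h3, hAs2]
  have h := Real.sqrt_le_sqrt hsq
  rwa [Real.sqrt_sq (by positivity), Real.sqrt_sq (norm_nonneg _)] at h

lemma integral_piece (a L c d : ℝ) (ha : 0 < a) (hL : 0 < L) (hcd : c ≤ d) :
    ∫ t in c..d, a / (L + a * (t - c)) = Real.log (L + a * (d - c)) - Real.log L := by
  have hpos : ∀ t ∈ Set.uIcc c d, 0 < L + a * (t - c) := by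
    intro t ht
    rw [Set.uIcc_of_le hcd] at ht
    have := mul_nonneg ha.le (sub_nonneg.mpr ht.1)
    linarith
  have h : ∀ t ∈ Set.uIcc c d,
      HasDerivAt (fun t => Real.log (L + a * (t - c))) (a / (L + a * (t - c))) t := by
    intro t ht
    have h1 : HasDerivAt (fun t : ℝ => L + a * (t - c)) a t := by
      simpa using (((hasDerivAt_id t).sub_const c).const_mul a).const_add L
    simpa using h1.log (hpos t ht).ne'
  have hint : IntervalIntegrable (fun t => a / (L + a * (t - c))) volume c d := by
    apply ContinuousOn.intervalIntegrable
    apply ContinuousOn.div continuousOn_const (by fun_prop)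
    intro t ht
    exact (hpos t ht).ne'
  rw [intervalIntegral.integral_eq_sub_of_hasDerivAt h hint]
  simp

theorem stmt_10 (p q : EuclideanSpace ℝ (Fin 4)) (Λ' η : ℝ)
    (hΛ : 0 < Λ') (hη0 : 0 ≤ η) (hη1 : η ≤ Λ') :
    (∫ t in (0:ℝ)..1, ‖p‖ / (Λ' + ‖t • p + q‖)) ≤
      2 * (Real.log 4 + logPlus (‖p‖ / (Λ' + η))) := by
  have hlogPlus_nonneg : ∀ x : ℝ, 0 ≤ logPlus x := fun x =>
    Real.log_nonneg (le_max_left _ _)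
  have hlog4 : (0:ℝ) ≤ Real.log 4 := Real.log_nonneg (by norm_num)
  by_cases hp : p = 0
  · simp only [hp, norm_zero, zero_div, intervalIntegral.integral_zero]
    linarith [hlog4, hlogPlus_nonneg ((0:ℝ) / (Λ' + η)), hlogPlus_nonneg (0:ℝ)]
  have hpn : (0:ℝ) < ‖p‖ := norm_pos_iff.mpr hp
  set a : ℝ := ‖p‖ with ha
  set L : ℝ := Λ' with hL
  set s : ℝ := -(inner ℝ p q : ℝ) / ‖p‖ ^ 2 with hs
  set t₁ : ℝ := min 1 (max 0 s) with ht₁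
  have ht₁0 : 0 ≤ t₁ := le_min zero_le_one (le_max_left _ _)
  have ht₁1 : t₁ ≤ 1 := min_le_left _ _
  -- pointwise bound
  have hden : ∀ t ∈ Set.Icc (0:ℝ) 1, L + a * |t - t₁| ≤ L + ‖t • p + q‖ := by
    intro t ht
    have h1 : a * |t - t₁| ≤ a * |t - s| :=
      mul_le_mul_of_nonneg_left (clamp_abs t s ht.1 ht.2) hpn.le
    have h2 := norm_line_lower p q hp t
    simp only [← hs] at h2
    linarith
  -- continuity / integrability
  have hc1 : ContinuousOn (fun t : ℝ => a / (L + ‖t • p + q‖)) (Set.uIcc (0:ℝ) 1) := by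
    apply ContinuousOn.div continuousOn_const
    · fun_prop
    · intro t _
      positivity
  have hc2 : ∀ u v : ℝ, ContinuousOn (fun t : ℝ => a / (L + a * |t - t₁|)) (Set.uIcc u v) := by
    intro u v
    apply ContinuousOn.div continuousOn_const
    · fun_prop
    · intro t _
      positivity
  have hint1 : IntervalIntegrable (fun t : ℝ => a / (L + ‖t • p + q‖)) volume 0 1 :=
    hc1.intervalIntegrable
  have hint2 : ∀ u v : ℝ, IntervalIntegrable (fun t : ℝ => a / (L + a * |t - t₁|)) volume u v :=
    fun u v => (hc2 u v).intervalIntegrable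
  have hmono : (∫ t in (0:ℝ)..1, a / (L + ‖t • p + q‖)) ≤
      ∫ t in (0:ℝ)..1, a / (L + a * |t - t₁|) := by
    apply intervalIntegral.integral_mono_on zero_le_one hint1 (hint2 0 1)
    intro t ht
    have h := hden t ht
    gcongr
  -- compute the majorant integral
  have hsplit : (∫ t in (0:ℝ)..1, a / (L + a * |t - t₁|)) =
      (∫ t in (0:ℝ)..t₁, a / (L + a * |t - t₁|)) +
      ∫ t in t₁..1, a / (L + a * |t - t₁|) :=
    (intervalIntegral.integral_add_adjacent_intervals (hint2 0 t₁) (hint2 t₁ 1)).symm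
  have hright : (∫ t in t₁..1, a / (L + a * |t - t₁|)) =
      Real.log (L + a * (1 - t₁)) - Real.log L := by
    rw [intervalIntegral.integral_congr (g := fun t => a / (L + a * (t - t₁)))]
    · exact integral_piece a L t₁ 1 hpn hΛ ht₁1
    · intro t ht
      rw [Set.uIcc_of_le ht₁1] at ht
      dsimp only
      rw [abs_of_nonneg (sub_nonneg.mpr ht.1)]
  have hleft : (∫ t in (0:ℝ)..t₁, a / (L + a * |t - t₁|)) =
      Real.log (L + a * t₁) - Real.log L := by
    rw [intervalIntegral.integral_congr (g := fun t => a / (L + a * (t₁ - t)))]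
    · rw [show (fun t => a / (L + a * (t₁ - t))) = (fun u => a / (L + a * (u - 0))) ∘
        (fun t => t₁ - t) by funext t; simp]
      rw [show (∫ t in (0:ℝ)..t₁, ((fun u => a / (L + a * (u - 0))) ∘ (fun t => t₁ - t)) t) =
        ∫ x in (t₁ - t₁)..(t₁ - 0), a / (L + a * (x - 0)) from
        intervalIntegral.integral_comp_sub_left (fun u => a / (L + a * (u - 0))) t₁]
      rw [sub_self, sub_zero]
      rw [integral_piece a L 0 t₁ hpn hΛ ht₁0]
      ring_nf
    · intro t ht
      rw [Set.uIcc_of_le ht₁0] at ht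
      dsimp only
      rw [abs_of_nonpos (sub_nonpos.mpr ht.2), neg_sub]
  have hbound2 : (∫ t in (0:ℝ)..1, a / (L + a * |t - t₁|)) ≤
      2 * (Real.log (L + a) - Real.log L) := by
    rw [hsplit, hright, hleft]
    have hm1 : Real.log (L + a * t₁) ≤ Real.log (L + a) := by
      apply Real.log_le_log (by nlinarith [mul_nonneg hpn.le ht₁0])
      nlinarith
    have hm2 : Real.log (L + a * (1 - t₁)) ≤ Real.log (L + a) := by
      apply Real.log_le_log (by nlinarith [mul_nonneg hpn.le (sub_nonneg.mpr ht₁1)])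
      nlinarith
    linarith
  -- final comparison
  have hfinal : Real.log (L + a) - Real.log L ≤ Real.log 4 + logPlus (a / (L + η)) := by
    have hLη : (0:ℝ) < L + η := by linarith
    rcases le_or_gt a (L + η) with hcase | hcase
    · have : logPlus (a / (L + η)) = 0 := by
        unfold logPlus
        rw [max_eq_left (by rw [div_le_one hLη]; linarith), Real.log_one]
      rw [this, add_zero]
      have h4 : L + a ≤ 4 * L := by linarith
      have := Real.log_le_log (by positivity) h4
      rw [Real.log_mul (by norm_num) hΛ.ne'] at this
      linarith
    · have : logPlus (a / (L + η)) = Real.log (a / (L + η)) := by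
        unfold logPlus
        rw [max_eq_right ((one_le_div hLη).mpr hcase.le)]
      rw [this]
      have h4 : (L + a) * (L + η) ≤ 4 * a * L := by nlinarith
      have key : L + a ≤ L * (4 * (a / (L + η))) := by
        have heq : L * (4 * (a / (L + η))) = 4 * a * L / (L + η) := by
          field_simp
        rw [heq, le_div_iff₀ hLη]
        nlinarith
      have := Real.log_le_log (by positivity) key
      rw [Real.log_mul hΛ.ne' (by positivity),
        Real.log_mul (by norm_num) (by positivity)] at this
      linarith
  calc (∫ t in (0:ℝ)..1, a / (L + ‖t • p + q‖)) ≤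
      ∫ t in (0:ℝ)..1, a / (L + a * |t - t₁|) := hmono
    _ ≤ 2 * (Real.log (L + a) - Real.log L) := hbound2
    _ ≤ 2 * (Real.log 4 + logPlus (a / (L + η))) := by linarith
end

section
/- Let m ≥ 0, x, y ≥ 0, and let P⁰(t) = Σ_{k=0}^n c_k t^k be a polynomial with nonnegative coefficients. Define log_m t := log₊(max(t,m)). Then there exist polynomials P¹, P² of degree n with nonnegative coefficients such that P⁰(log_m √(x²+y²)) ≤ P¹(log_m y) + P²(log_m x). -/
/-- `log_m t := log₊ (max t m)`. -/
noncomputable def logm (m t : ℝ) : ℝ := logPlus (max t m)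

lemma logm_nonneg' (m t : ℝ) : 0 ≤ logm m t :=
  Real.log_nonneg (le_max_left _ _)

lemma logm_key (m x y : ℝ) (hx : 0 ≤ x) (hy : 0 ≤ y) :
    logm m (Real.sqrt (x ^ 2 + y ^ 2)) ≤ logm m x + logm m y + Real.log 2 := by
  set a := max 1 (max x m) with ha'
  set b := max 1 (max y m) with hb'
  have ha : (1:ℝ) ≤ a := le_max_left _ _
  have hb : (1:ℝ) ≤ b := le_max_left _ _
  have hsxy : Real.sqrt (x ^ 2 + y ^ 2) ≤ x + y := by
    rw [show x + y = Real.sqrt ((x + y) ^ 2) by rw [Real.sqrt_sq (by linarith)]]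
    apply Real.sqrt_le_sqrt; nlinarith
  have hx' : x ≤ a := le_trans (le_max_left x m) (le_max_right _ _)
  have hy' : y ≤ b := le_trans (le_max_left y m) (le_max_right _ _)
  have hm' : m ≤ a := le_trans (le_max_right x m) (le_max_right _ _)
  have h1 : max 1 (max (Real.sqrt (x ^ 2 + y ^ 2)) m) ≤ 2 * a * b := by
    apply max_le
    · nlinarith
    · apply max_le <;> nlinarith
  have h2 : Real.log (max 1 (max (Real.sqrt (x ^ 2 + y ^ 2)) m)) ≤ Real.log (2 * a * b) :=
    Real.log_le_log (lt_of_lt_of_le one_pos (le_max_left _ _)) h1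
  calc logm m (Real.sqrt (x ^ 2 + y ^ 2)) ≤ Real.log (2 * a * b) := h2
    _ = Real.log 2 + Real.log a + Real.log b := by
        rw [Real.log_mul (by positivity) (by positivity),
          Real.log_mul (by norm_num) (by positivity)]
    _ = logm m x + logm m y + Real.log 2 := by
        unfold logm logPlus; ring

lemma pow_add_le' (u v : ℝ) (hu : 0 ≤ u) (hv : 0 ≤ v) (k : ℕ) :
    (u + v) ^ k ≤ 2 ^ k * (u ^ k + v ^ k) := by
  have h2 : (0:ℝ) ≤ 2 ^ k := by positivity
  rcases le_total u v with h | h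
  · calc (u + v) ^ k ≤ (2 * v) ^ k := pow_le_pow_left₀ (by linarith) (by linarith) k
      _ = 2 ^ k * v ^ k := mul_pow _ _ _
      _ ≤ 2 ^ k * (u ^ k + v ^ k) := by nlinarith [pow_nonneg hu k]
  · calc (u + v) ^ k ≤ (2 * u) ^ k := pow_le_pow_left₀ (by linarith) (by linarith) k
      _ = 2 ^ k * u ^ k := mul_pow _ _ _
      _ ≤ 2 ^ k * (u ^ k + v ^ k) := by nlinarith [pow_nonneg hv k]

lemma sum_choose_pow' (B : ℝ) (n k : ℕ) (hk : k ≤ n) :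
    ∑ j ∈ Finset.range (n + 1), (k.choose j : ℝ) * B ^ j = (1 + B) ^ k := by
  rw [add_comm (1:ℝ) B, add_pow]
  simp only [one_pow, mul_one]
  rw [Finset.sum_subset (Finset.range_subset_range.2 (Nat.succ_le_succ hk))
    (fun j _ hj' => by rw [Nat.choose_eq_zero_of_lt (by simpa using hj')]; simp)]
  exact Finset.sum_congr rfl fun j _ => mul_comm _ _

theorem stmt_13 (n : ℕ) (m : ℝ) (hm : 0 ≤ m) (c : ℕ → ℝ) (hc : ∀ k, 0 ≤ c k) :
    ∃ c₁ c₂ : ℕ → ℝ, (∀ k, 0 ≤ c₁ k) ∧ (∀ k, 0 ≤ c₂ k) ∧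
      ∀ x y : ℝ, 0 ≤ x → 0 ≤ y →
        (∑ k ∈ Finset.range (n + 1),
            c k * (logm m (Real.sqrt (x ^ 2 + y ^ 2))) ^ k) ≤
          (∑ k ∈ Finset.range (n + 1), c₁ k * (logm m y) ^ k) +
          (∑ k ∈ Finset.range (n + 1), c₂ k * (logm m x) ^ k) := by
  set D := Real.log 2 with hD
  have hD0 : 0 ≤ D := Real.log_nonneg one_le_two
  set E : ℝ := 2 * (1 + D) with hE
  have hE0 : 0 ≤ E := by positivity
  refine ⟨fun j => ∑ k ∈ Finset.range (n + 1), c k * E ^ k * (k.choose j : ℝ),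
    fun j => ∑ k ∈ Finset.range (n + 1), c k * E ^ k * (k.choose j : ℝ),
    fun j => Finset.sum_nonneg fun k _ =>
      mul_nonneg (mul_nonneg (hc k) (pow_nonneg hE0 k)) (Nat.cast_nonneg _),
    fun j => Finset.sum_nonneg fun k _ =>
      mul_nonneg (mul_nonneg (hc k) (pow_nonneg hE0 k)) (Nat.cast_nonneg _), ?_⟩
  intro x y hx hy
  set A := logm m x with hA'
  set B := logm m y with hB'
  set L := logm m (Real.sqrt (x ^ 2 + y ^ 2)) with hL'
  have hA : 0 ≤ A := logm_nonneg' m x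
  have hB : 0 ≤ B := logm_nonneg' m y
  have hL : 0 ≤ L := logm_nonneg' m _
  have hkey : L ≤ A + B + D := logm_key m x y hx hy
  have hterm : ∀ k, L ^ k ≤ E ^ k * (1 + B) ^ k + E ^ k * (1 + A) ^ k := by
    intro k
    have h1 : L ^ k ≤ ((1 + D) * (1 + A) + (1 + D) * (1 + B)) ^ k := by
      apply pow_le_pow_left₀ hL; nlinarith
    have h2 := pow_add_le' ((1 + D) * (1 + A)) ((1 + D) * (1 + B))
      (by positivity) (by positivity) k
    calc L ^ k ≤ ((1 + D) * (1 + A) + (1 + D) * (1 + B)) ^ k := h1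
      _ ≤ 2 ^ k * (((1 + D) * (1 + A)) ^ k + ((1 + D) * (1 + B)) ^ k) := h2
      _ = E ^ k * (1 + B) ^ k + E ^ k * (1 + A) ^ k := by
          rw [hE, mul_pow, mul_pow, mul_pow]; ring
  have hsum : ∀ (T : ℝ),
      (∑ j ∈ Finset.range (n + 1),
        (∑ k ∈ Finset.range (n + 1), c k * E ^ k * (k.choose j : ℝ)) * T ^ j) =
      ∑ k ∈ Finset.range (n + 1), c k * E ^ k * (1 + T) ^ k := by
    intro T
    calc (∑ j ∈ Finset.range (n + 1),
          (∑ k ∈ Finset.range (n + 1), c k * E ^ k * (k.choose j : ℝ)) * T ^ j)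
        = ∑ j ∈ Finset.range (n + 1), ∑ k ∈ Finset.range (n + 1),
            c k * E ^ k * ((k.choose j : ℝ) * T ^ j) := by
          simp_rw [Finset.sum_mul, mul_assoc]
      _ = ∑ k ∈ Finset.range (n + 1), ∑ j ∈ Finset.range (n + 1),
            c k * E ^ k * ((k.choose j : ℝ) * T ^ j) := Finset.sum_comm
      _ = ∑ k ∈ Finset.range (n + 1), c k * E ^ k * (1 + T) ^ k := by
          refine Finset.sum_congr rfl fun k hk => ?_
          rw [← Finset.mul_sum,
            sum_choose_pow' T n k (Nat.lt_succ_iff.mp (Finset.mem_range.mp hk))]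
  calc ∑ k ∈ Finset.range (n + 1), c k * L ^ k
      ≤ ∑ k ∈ Finset.range (n + 1), c k * (E ^ k * (1 + B) ^ k + E ^ k * (1 + A) ^ k) :=
        Finset.sum_le_sum fun k _ => mul_le_mul_of_nonneg_left (hterm k) (hc k)
    _ = (∑ k ∈ Finset.range (n + 1), c k * E ^ k * (1 + B) ^ k)
        + (∑ k ∈ Finset.range (n + 1), c k * E ^ k * (1 + A) ^ k) := by
        rw [← Finset.sum_add_distrib]; exact Finset.sum_congr rfl fun k _ => by ring
    _ = _ := by rw [hsum B, hsum A]
end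

section
/- Let 0 ≤ β ≤ 1 and define f(x) := (e^{−βx} − e^{−x})/x for x > 0 (extended continuously at 0 by 1−β). Then for every natural number w and all x ≥ 0, |f^{(w)}(x)| < e · w! / (1+x)^{w+1}. -/
open MeasureTheory Set Real

lemma aux_repr (β : ℝ) (hβ0 : 0 ≤ β) (hβ1 : β ≤ 1) (w : ℕ) :
    ∀ x : ℝ, iteratedDeriv w
        (fun t : ℝ => if t = 0 then 1 - β else (Real.exp (-β * t) - Real.exp (-t)) / t) x
      = ∫ γ in Set.Ioc β 1, (-γ) ^ w * Real.exp (-γ * x) := by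
  induction w with
  | zero =>
    intro x
    rw [iteratedDeriv_zero]
    simp only [pow_zero, one_mul]
    by_cases hx : x = 0
    · subst hx
      rw [if_pos rfl]
      simp only [mul_zero, Real.exp_zero]
      rw [setIntegral_const, Real.volume_real_Ioc_of_le hβ1, smul_eq_mul, mul_one]
    · rw [if_neg hx, ← intervalIntegral.integral_of_le hβ1]
      have key : ∀ γ ∈ Set.uIcc β 1,
          HasDerivAt (fun γ : ℝ => -(Real.exp (-(γ * x)) / x)) (Real.exp (-γ * x)) γ := by
        intro γ _
        have h1 : HasDerivAt (fun γ : ℝ => γ * x) x γ := hasDerivAt_mul_const x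
        have h3 := (h1.neg.exp.div_const x).neg
        refine h3.congr_deriv ?_
        simp only [Pi.neg_apply, neg_mul, mul_neg, neg_div, neg_neg]
        field_simp
      rw [intervalIntegral.integral_eq_sub_of_hasDerivAt key
        ((Real.continuous_exp.comp (by continuity)).intervalIntegrable β 1)]
      field_simp
      ring_nf
  | succ w IH =>
    intro x
    rw [iteratedDeriv_succ]
    have hfun : iteratedDeriv w
        (fun t : ℝ => if t = 0 then 1 - β else (Real.exp (-β * t) - Real.exp (-t)) / t)
        = fun y : ℝ => ∫ γ in Set.Ioc β 1, (-γ) ^ w * Real.exp (-γ * y) := funext IH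
    rw [hfun]
    have hcont : ∀ y : ℝ, Continuous (fun γ : ℝ => (-γ) ^ w * Real.exp (-γ * y)) := by
      intro y; continuity
    have hcont' : ∀ y : ℝ, Continuous (fun γ : ℝ => (-γ) ^ (w + 1) * Real.exp (-γ * y)) := by
      intro y; continuity
    have hmeas : MeasurableSet (Set.Ioc β (1 : ℝ)) := measurableSet_Ioc
    have key := hasDerivAt_integral_of_dominated_loc_of_deriv_le
      (μ := volume.restrict (Set.Ioc β 1)) (x₀ := x)
      (F := fun y γ => (-γ) ^ w * Real.exp (-γ * y))
      (F' := fun y γ => (-γ) ^ (w + 1) * Real.exp (-γ * y))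
      (bound := fun _ => Real.exp (|x| + 1)) (s := Metric.ball x 1) (Metric.ball_mem_nhds x one_pos)
      (Filter.Eventually.of_forall fun y => (hcont y).aestronglyMeasurable)
      ((hcont x).integrableOn_Ioc)
      ((hcont' x).aestronglyMeasurable)
      ?_ ?_ ?_
    · exact key.2.deriv
    · -- bound
      filter_upwards [self_mem_ae_restrict hmeas] with γ hγ y hy
      have hγ0 : 0 < γ := lt_of_le_of_lt hβ0 hγ.1
      have h1 : ‖(-γ) ^ (w + 1) * Real.exp (-γ * y)‖
          = γ ^ (w + 1) * Real.exp (-γ * y) := by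
        rw [Real.norm_eq_abs, abs_mul, abs_pow, abs_neg, abs_of_pos hγ0,
          abs_of_pos (Real.exp_pos _)]
      rw [h1]
      have hyx : |y| ≤ |x| + 1 := by
        have := mem_ball_iff_norm.mp hy
        rw [Real.norm_eq_abs] at this
        have : |y| - |x| ≤ |y - x| := by
          have := abs_sub_abs_le_abs_sub y x
          linarith
        linarith [abs_sub_abs_le_abs_sub y x, (mem_ball_iff_norm.mp hy :)]
      have h2 : Real.exp (-γ * y) ≤ Real.exp (|x| + 1) := by
        apply Real.exp_le_exp.mpr
        have : -γ * y ≤ γ * |y| := by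
          have : -(γ * y) ≤ |γ * y| := neg_le_abs _
          rw [abs_mul, abs_of_pos hγ0] at this
          linarith
        have h3 : γ * |y| ≤ |y| := by
          nlinarith [abs_nonneg y, hγ.2]
        linarith
      calc γ ^ (w + 1) * Real.exp (-γ * y)
          ≤ 1 * Real.exp (|x| + 1) := by
            apply mul_le_mul (pow_le_one₀ hγ0.le hγ.2) h2 (Real.exp_pos _).le one_pos.le
        _ = Real.exp (|x| + 1) := one_mul _
    · exact ((integrableOn_const_iff).mpr (Or.inr (by rw [Real.volume_Ioc]; exact ENNReal.ofReal_lt_top)))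
    · -- differentiability
      filter_upwards [self_mem_ae_restrict hmeas] with γ _ y _
      have h1 : HasDerivAt (fun y : ℝ => -γ * y) (-γ) y := by
        simpa using (hasDerivAt_id y).const_mul (-γ)
      have h2 := h1.exp.const_mul ((-γ) ^ w)
      refine h2.congr_deriv ?_
      rw [pow_succ]
      ring

theorem stmt_15 (β : ℝ) (hβ0 : 0 ≤ β) (hβ1 : β ≤ 1) (w : ℕ) (x : ℝ) (hx : 0 ≤ x) :
    |iteratedDeriv w
        (fun t : ℝ => if t = 0 then 1 - β else (Real.exp (-β * t) - Real.exp (-t)) / t) x| <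
      Real.exp 1 * (w.factorial : ℝ) / (1 + x) ^ (w + 1) := by
  rw [aux_repr β hβ0 hβ1 w x]
  set c : ℝ := 1 + x with hc
  have hc0 : 0 < c := by positivity
  have hc1 : 1 ≤ c := by simp [hc]; linarith
  set g : ℝ → ℝ := fun γ => Real.exp 1 * (γ ^ w * Real.exp (-(c * γ))) with hg
  -- integrability of g on Ioi 0
  have hInt : IntegrableOn g (Set.Ioi 0) := by
    have h0 := integrableOn_rpow_mul_exp_neg_mul_rpow
      (p := 1) (s := (w : ℝ)) (b := c)
      (lt_of_lt_of_le (by norm_num) (Nat.cast_nonneg w)) one_pos hc0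
    have h1 : IntegrableOn (fun γ : ℝ => γ ^ (w : ℝ) * Real.exp (-c * γ ^ (1 : ℝ)))
        (Set.Ioi 0) := h0
    have h2 : IntegrableOn (fun γ : ℝ => γ ^ w * Real.exp (-(c * γ))) (Set.Ioi 0) := by
      apply h1.congr_fun _ measurableSet_Ioi
      intro γ hγ
      simp only [Real.rpow_one, Real.rpow_natCast, neg_mul]
    exact h2.const_mul (Real.exp 1)
  -- value of the integral of g on Ioi 0
  have hval : ∫ γ in Set.Ioi (0 : ℝ), g γ
      = Real.exp 1 * (w.factorial : ℝ) / c ^ (w + 1) := by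
    rw [hg]
    rw [MeasureTheory.integral_const_mul]
    have h1 : ∫ γ in Set.Ioi (0 : ℝ), γ ^ w * Real.exp (-(c * γ))
        = ∫ γ in Set.Ioi (0 : ℝ), γ ^ (((w : ℝ) + 1) - 1) * Real.exp (-(c * γ)) := by
      apply setIntegral_congr_fun measurableSet_Ioi
      intro γ hγ
      have : ((w : ℝ) + 1) - 1 = (w : ℝ) := by ring
      simp only [this, Real.rpow_natCast]
    rw [h1, integral_rpow_mul_exp_neg_mul_Ioi (by positivity) hc0,
      Real.Gamma_nat_eq_factorial]
    rw [show ((w : ℝ) + 1) = ((w + 1 : ℕ) : ℝ) by push_cast; ring, Real.rpow_natCast]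
    field_simp
    rw [← mul_pow, one_div, inv_mul_cancel₀ hc0.ne', one_pow]
  -- nonnegativity of g on positive reals
  have hgnn : ∀ γ : ℝ, 0 < γ → 0 ≤ g γ := by
    intro γ hγ
    have := Real.exp_pos (1 : ℝ)
    positivity
  -- split Ioi 0 = Ioc 0 1 ∪ Ioi 1
  have hsplit : ∫ γ in Set.Ioi (0 : ℝ), g γ
      = (∫ γ in Set.Ioc (0 : ℝ) 1, g γ) + ∫ γ in Set.Ioi (1 : ℝ), g γ := by
    rw [← Set.Ioc_union_Ioi_eq_Ioi (zero_le_one : (0 : ℝ) ≤ 1)]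
    exact setIntegral_union Set.Ioc_disjoint_Ioi_same measurableSet_Ioi
      (hInt.mono_set (fun γ hγ => hγ.1)) (hInt.mono_set (Set.Ioi_subset_Ioi zero_le_one))
  have hpos : 0 < ∫ γ in Set.Ioi (1 : ℝ), g γ := by
    rw [setIntegral_pos_iff_support_of_nonneg_ae]
    · have heq : Function.support g ∩ Set.Ioi 1 = Set.Ioi 1 := by
        rw [Set.inter_eq_right]
        intro γ hγ
        have hγ0 : (0 : ℝ) < γ := lt_trans one_pos hγ
        simp only [Function.mem_support, hg]
        positivity
      rw [heq, Real.volume_Ioi]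
      exact ENNReal.zero_lt_top
    · filter_upwards [self_mem_ae_restrict measurableSet_Ioi] with γ hγ
      exact hgnn γ (lt_trans one_pos hγ)
    · exact hInt.mono_set (Set.Ioi_subset_Ioi zero_le_one)
  -- step 1 : bound the integral by the integral of g on Ioc β 1
  have step1 : |∫ γ in Set.Ioc β 1, (-γ) ^ w * Real.exp (-γ * x)|
      ≤ ∫ γ in Set.Ioc β 1, g γ := by
    have habs : |∫ γ in Set.Ioc β 1, (-γ) ^ w * Real.exp (-γ * x)|
        ≤ ∫ γ in Set.Ioc β 1, |(-γ) ^ w * Real.exp (-γ * x)| := by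
      have h := norm_integral_le_integral_norm (μ := volume.restrict (Set.Ioc β 1))
          (f := fun γ : ℝ => (-γ) ^ w * Real.exp (-γ * x))
      simp only [Real.norm_eq_abs] at h
      exact h
    refine habs.trans (setIntegral_mono_on ?_ ?_ measurableSet_Ioc ?_)
    · exact ((by continuity : Continuous (fun γ : ℝ => (-γ) ^ w * Real.exp (-γ * x))).integrableOn_Ioc).abs
    · exact hInt.mono_set (fun γ hγ => lt_of_le_of_lt hβ0 hγ.1)
    · intro γ hγ
      have hγ0 : 0 < γ := lt_of_le_of_lt hβ0 hγ.1
      rw [abs_mul, abs_pow, abs_neg, abs_of_pos hγ0, abs_of_pos (Real.exp_pos _)]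
      have hexp : Real.exp (-γ * x) ≤ Real.exp 1 * Real.exp (-(c * γ)) := by
        rw [← Real.exp_add]
        apply Real.exp_le_exp.mpr
        have : c * γ = γ + γ * x := by rw [hc]; ring
        nlinarith [hγ.2]
      calc γ ^ w * Real.exp (-γ * x)
          ≤ γ ^ w * (Real.exp 1 * Real.exp (-(c * γ))) :=
            mul_le_mul_of_nonneg_left hexp (by positivity)
        _ = g γ := by rw [hg]; ring
  have step2 : ∫ γ in Set.Ioc β 1, g γ ≤ ∫ γ in Set.Ioc (0 : ℝ) 1, g γ := by
    apply setIntegral_mono_set (hInt.mono_set (fun γ hγ => hγ.1))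
    · filter_upwards [self_mem_ae_restrict measurableSet_Ioc] with γ hγ
      exact hgnn γ hγ.1
    · exact HasSubset.Subset.eventuallyLE (Set.Ioc_subset_Ioc_left hβ0)
  calc |∫ γ in Set.Ioc β 1, (-γ) ^ w * Real.exp (-γ * x)|
      ≤ ∫ γ in Set.Ioc (0 : ℝ) 1, g γ := step1.trans step2
    _ < ∫ γ in Set.Ioi (0 : ℝ), g γ := by rw [hsplit]; linarith
    _ = Real.exp 1 * (w.factorial : ℝ) / (1 + x) ^ (w + 1) := by rw [hval]
end
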